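/- arXiv:1301.5221 — 4 statements merged into one kernel-verified Lean document; each statement's English description precedes it below -/
import Mathlib

section
/- Let k be a field, h ≥ 2, m = h(h+1)/2, and let M be the generic symmetric h×h matrix whose (i,j)-entry is the variable Y_{ij} = Y_{ji}, so that det M ∈ k[Y_{ij} : 1 ≤ i ≤ j ≤ h]. Then the weight lattice of det M equals the trace-zero part of Λ_h; that is, identifying ℤ^m with symmetric integer h×h matrices ω = (ω_{ij}), one has Λ(det M) = {ω : 2ω_{ij} = ω_{ii} + ω_{jj} for all i,j, and Σ_{i=1}^h ω_{ii} = 0}. -/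
open MvPolynomial

/-- The weight lattice `Λ(f) = {η ∈ ℤ^σ : η·α = 0 for every exponent vector α with c_α ≠ 0}`
of a polynomial `f = Σ_α c_α X^α`, as a sublattice (submodule over `ℤ`) of `σ → ℤ`. -/
def weightLattice {σ : Type*} [Fintype σ] {k : Type*} [CommSemiring k]
    (f : MvPolynomial σ k) : Submodule ℤ (σ → ℤ) where
  carrier := {η | ∀ α ∈ f.support, ∑ i, η i * (α i : ℤ) = 0}
  add_mem' := by
    intro a b ha hb α hα
    simp only [Pi.add_apply, add_mul, Finset.sum_add_distrib, ha α hα, hb α hα, add_zero]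
  zero_mem' := by
    intro α hα
    simp
  smul_mem' := by
    intro c x hx α hα
    simp only [Pi.smul_apply, smul_eq_mul, mul_assoc, ← Finset.mul_sum, hx α hα, mul_zero]

noncomputable def dd {h : ℕ} (σ : Equiv.Perm (Fin h)) : Sym2 (Fin h) →₀ ℕ :=
  ∑ i, Finsupp.single s(σ i, i) 1

lemma prod_X_eq {k : Type*} [CommSemiring k] {h : ℕ} (σ : Equiv.Perm (Fin h)) :
    ∏ i, (X s(σ i, i) : MvPolynomial (Sym2 (Fin h)) k) = monomial (dd σ) 1 := by
  classical
  rw [dd]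
  induction (Finset.univ : Finset (Fin h)) using Finset.induction with
  | empty => simp [monomial_eq]
  | insert _ _ hx ih =>
      rw [Finset.prod_insert hx, Finset.sum_insert hx, ih, X, monomial_mul, one_mul]

lemma dd_diag {h : ℕ} (σ : Equiv.Perm (Fin h)) (j : Fin h) :
    dd σ s(j, j) = if σ j = j then 1 else 0 := by
  classical
  rw [dd, Finsupp.finset_sum_apply]
  rw [Finset.sum_eq_single j]
  · rw [Finsupp.single_apply]
    by_cases hs : σ j = j
    · simp [hs]
    · have : s(σ j, j) ≠ s(j, j) := by simp [Sym2.eq_iff, hs]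
      simp [this, hs]
  · intro i _ hij
    have : s(σ i, i) ≠ s(j, j) := by simp [Sym2.eq_iff, hij]
    simp [Finsupp.single_apply, this]
  · simp

lemma dd_fix {h : ℕ} {σ τ : Equiv.Perm (Fin h)} (hd : dd σ = dd τ) (j : Fin h) :
    σ j = j ↔ τ j = j := by
  have := congrArg (fun f => f s(j, j)) hd
  simp only [dd_diag] at this
  by_cases h1 : σ j = j <;> by_cases h2 : τ j = j <;> simp_all

lemma coeff_det {k : Type*} [Field k] {h : ℕ}
    (M : Matrix (Fin h) (Fin h) (MvPolynomial (Sym2 (Fin h)) k))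
    (hM : ∀ i j : Fin h, M i j = X s(i, j)) (α : Sym2 (Fin h) →₀ ℕ) :
    coeff α M.det = ∑ σ : Equiv.Perm (Fin h),
      (Equiv.Perm.sign σ : ℤ) • (if dd σ = α then (1 : k) else 0) := by
  rw [Matrix.det_apply, coeff_sum]
  refine Finset.sum_congr rfl fun σ _ => ?_
  have : ∀ i : Fin h, M (σ i) i = X s(σ i, i) := fun i => hM (σ i) i
  rw [Units.smul_def, coeff_smul, Finset.prod_congr rfl (fun i _ => this i), prod_X_eq,
    coeff_monomial]

lemma dd_one_mem {k : Type*} [Field k] {h : ℕ}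
    (M : Matrix (Fin h) (Fin h) (MvPolynomial (Sym2 (Fin h)) k))
    (hM : ∀ i j : Fin h, M i j = X s(i, j)) :
    dd (1 : Equiv.Perm (Fin h)) ∈ M.det.support := by
  classical
  rw [mem_support_iff, coeff_det M hM]
  have : ∀ σ : Equiv.Perm (Fin h),
      (Equiv.Perm.sign σ : ℤ) • (if dd σ = dd 1 then (1 : k) else 0)
      = if σ = 1 then (Equiv.Perm.sign σ : ℤ) • (1 : k) else 0 := by
    intro σ
    by_cases hσ : σ = 1
    · simp [hσ]
    · have : dd σ ≠ dd 1 := by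
        intro hd
        exact hσ (Equiv.ext fun j => (dd_fix hd j).mpr rfl)
      simp [this, hσ]
  rw [Finset.sum_congr rfl fun σ _ => this σ, Finset.sum_ite_eq' Finset.univ]
  simp

lemma dd_swap_mem {k : Type*} [Field k] {h : ℕ}
    (M : Matrix (Fin h) (Fin h) (MvPolynomial (Sym2 (Fin h)) k))
    (hM : ∀ i j : Fin h, M i j = X s(i, j)) {i j : Fin h} (hij : i ≠ j) :
    dd (Equiv.swap i j) ∈ M.det.support := by
  classical
  rw [mem_support_iff, coeff_det M hM]
  have key : ∀ σ : Equiv.Perm (Fin h), dd σ = dd (Equiv.swap i j) → σ = Equiv.swap i j := by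
    intro σ hd
    have hfix := dd_fix hd
    have hfix' : ∀ l : Fin h, l ≠ i → l ≠ j → σ l = l := by
      intro l hli hlj
      exact (hfix l).mpr (Equiv.swap_apply_of_ne_of_ne hli hlj)
    have hσi : σ i ≠ i := by
      intro hc
      have := (hfix i).mp hc
      rw [Equiv.swap_apply_left] at this
      exact hij this.symm
    have hσj : σ j ≠ j := by
      intro hc
      have := (hfix j).mp hc
      rw [Equiv.swap_apply_right] at this
      exact hij this
    have hσij : σ i = j := by
      by_contra hc
      have := hfix' (σ i) hσi hc
      exact hσi (σ.injective this)
    have hσji : σ j = i := by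
      by_contra hc
      have := hfix' (σ j) hc hσj
      exact hσj (σ.injective this)
    ext l
    by_cases hli : l = i
    · simp [hli, hσij, Equiv.swap_apply_left]
    by_cases hlj : l = j
    · simp [hlj, hσji, Equiv.swap_apply_right]
    · simp [hfix' l hli hlj, Equiv.swap_apply_of_ne_of_ne hli hlj]
  have : ∀ σ : Equiv.Perm (Fin h),
      (Equiv.Perm.sign σ : ℤ) • (if dd σ = dd (Equiv.swap i j) then (1 : k) else 0)
      = if σ = Equiv.swap i j then (Equiv.Perm.sign σ : ℤ) • (1 : k) else 0 := by
    intro σ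
    by_cases hσ : σ = Equiv.swap i j
    · simp [hσ]
    · have : dd σ ≠ dd (Equiv.swap i j) := fun hd => hσ (key σ hd)
      simp [this, hσ]
  rw [Finset.sum_congr rfl fun σ _ => this σ, Finset.sum_ite_eq' Finset.univ]
  simp [Equiv.Perm.sign_swap hij]

lemma dot_dd {h : ℕ} (ω : Sym2 (Fin h) → ℤ) (σ : Equiv.Perm (Fin h)) :
    ∑ p : Sym2 (Fin h), ω p * (dd σ p : ℤ) = ∑ i : Fin h, ω s(σ i, i) := by
  classical
  have : ∀ p : Sym2 (Fin h), (dd σ p : ℤ) = ∑ i : Fin h,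
      (if s(σ i, i) = p then (1 : ℤ) else 0) := by
    intro p
    rw [dd, Finsupp.finset_sum_apply, Nat.cast_sum]
    exact Finset.sum_congr rfl fun i _ => by rw [Finsupp.single_apply]; split <;> simp
  simp_rw [this, Finset.mul_sum, mul_ite, mul_one, mul_zero]
  rw [Finset.sum_comm]
  exact Finset.sum_congr rfl fun i _ => by rw [Finset.sum_ite_eq Finset.univ]; simp


/-- Let `k` be a field, `h ≥ 2`, and `M` the generic symmetric `h×h` matrix whose
`(i,j)` entry is the variable `Y_{ij} = Y_{ji}` (variables indexed by `Sym2 (Fin h)`, which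
realizes the identification of `ℤ^m`, `m = h(h+1)/2`, with symmetric integer `h×h` matrices).
Then the weight lattice of `det M` equals the trace-zero part of `Λ_h`:
`Λ(det M) = {ω : 2ω_{ij} = ω_{ii} + ω_{jj} for all i,j, and Σ_i ω_{ii} = 0}`. -/
theorem weightLattice_det_generic_symmetric {k : Type*} [Field k] {h : ℕ} (hh : 2 ≤ h)
    (M : Matrix (Fin h) (Fin h) (MvPolynomial (Sym2 (Fin h)) k))
    (hM : ∀ i j : Fin h, M i j = X s(i, j)) :
    (weightLattice M.det : Set (Sym2 (Fin h) → ℤ)) =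
      {ω | (∀ i j : Fin h, 2 * ω s(i, j) = ω s(i, i) + ω s(j, j)) ∧
        ∑ i : Fin h, ω s(i, i) = 0} := by
  classical
  ext ω
  have hmem : ω ∈ (weightLattice M.det : Set (Sym2 (Fin h) → ℤ)) ↔
      ∀ α ∈ M.det.support, ∑ p : Sym2 (Fin h), ω p * (α p : ℤ) = 0 := Iff.rfl
  rw [hmem, Set.mem_setOf_eq]
  constructor
  · intro hω
    have h0 : ∑ i : Fin h, ω s(i, i) = 0 := by
      have := hω (dd 1) (dd_one_mem M hM)
      rw [dot_dd] at this
      simpa using this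
    refine ⟨fun i j => ?_, h0⟩
    by_cases hij : i = j
    · subst hij; ring
    · have h1 : ∑ l : Fin h, ω s(Equiv.swap i j l, l) = 0 := by
        have := hω (dd (Equiv.swap i j)) (dd_swap_mem M hM hij)
        rwa [dot_dd] at this
      have h2 : ∑ l ∈ ({i, j} : Finset (Fin h)), (ω s(Equiv.swap i j l, l) - ω s(l, l))
          = ∑ l : Fin h, (ω s(Equiv.swap i j l, l) - ω s(l, l)) := by
        refine Finset.sum_subset (Finset.subset_univ _) fun x _ hx => ?_
        simp only [Finset.mem_insert, Finset.mem_singleton, not_or] at hx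
        rw [Equiv.swap_apply_of_ne_of_ne hx.1 hx.2, sub_self]
      rw [Finset.sum_pair hij, Finset.sum_sub_distrib, h1, h0, Equiv.swap_apply_left,
        Equiv.swap_apply_right] at h2
      have hsw : ω s(j, i) = ω s(i, j) := by rw [Sym2.eq_swap]
      rw [hsw] at h2
      linarith
  · rintro ⟨hpair, htr⟩ α hα
    obtain ⟨σ, hσ⟩ : ∃ σ : Equiv.Perm (Fin h), dd σ = α := by
      by_contra hc
      push_neg at hc
      rw [mem_support_iff, coeff_det M hM] at hα
      exact hα (Finset.sum_eq_zero fun σ _ => by simp [hc σ])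
    rw [← hσ, dot_dd]
    have h2 : 2 * ∑ i : Fin h, ω s(σ i, i) = 0 := by
      rw [Finset.mul_sum]
      have : ∀ i : Fin h, 2 * ω s(σ i, i) = ω s(σ i, σ i) + ω s(i, i) := fun i => hpair (σ i) i
      rw [Finset.sum_congr rfl fun i _ => this i, Finset.sum_add_distrib,
        Equiv.sum_comp σ (fun i => ω s(i, i)), htr, add_zero]
    linarith
end

section
/- Let k be an infinite field and M a symmetric h×h matrix of homogeneous linear forms in k[X₁,…,Xₙ] whose diagonal entries are nonzero and linearly independent; let ℓ(M) be the dimension of the span of all upper-triangular entries. Assume coordinates are chosen so that each nonzero entry of M is either one of the variables X₁,…,X_{ℓ(M)} or a linear form L_{ij}(X₁,…,X_{ℓ(M)}), with the h diagonal entries being h distinct variables. Define an equivalence relation (clusters) on the set of positions (i,j), i ≤ j, with M_{ij} ≠ 0, as the transitive closure of the relation identifying two positions whenever some variable occurs with nonzero coefficient in both entries; call a position (i,j) excessive if the diagonal variable M_{ii} or the diagonal variable M_{jj} does not occur with nonzero coefficient in M_{ij}; and set δ(M) = Σ_{clusters C} (|C| − 1) + #{excessive positions}. Then the hypersurface X =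 {det M = 0} ⊆ P^{n−1}(k) admits a linear, faithful torus action, diagonal in the coordinates X₁,…,Xₙ, of rank at least max(0, h − 1 + n − ℓ(M) − δ(M)). -/
set_option maxHeartbeats 2000000


open MvPolynomial Relation

/-- The linear substitution of variables `X_i ↦ Σ_j g_{ij} X_j` determined by a matrix `g`,
applied to a polynomial `f`. -/
noncomputable def substMat {k : Type*} [CommSemiring k] {n : ℕ}
    (g : Matrix (Fin n) (Fin n) k) (f : MvPolynomial (Fin n) k) : MvPolynomial (Fin n) k :=
  aeval (fun i => ∑ j, C (g i j) * X j) f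

/-- A matrix is scalar if it is a scalar multiple of the identity. -/
def IsScalarMat {k : Type*} [CommSemiring k] {n : ℕ} (g : Matrix (Fin n) (Fin n) k) : Prop :=
  ∃ c : k, g = c • (1 : Matrix (Fin n) (Fin n) k)

/-- The setoid of clusters: on the set of positions `(i,j)`, `i ≤ j`, with `M_{ij} ≠ 0`, the
equivalence relation generated by relating two positions whenever some variable occurs (with
nonzero coefficient) in both entries.  Its classes are the clusters. -/
def clusterSetoid {k : Type*} [Field k] {n h : ℕ}
    (M : Matrix (Fin h) (Fin h) (MvPolynomial (Fin n) k)) :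
    Setoid {p : Fin h × Fin h // p.1 ≤ p.2 ∧ M p.1 p.2 ≠ 0} :=
  EqvGen.setoid (fun p q => ∃ v : Fin n,
    v ∈ (M p.val.1 p.val.2).vars ∧ v ∈ (M q.val.1 q.val.2).vars)

/-- The excess `δ(M) = Σ_{clusters C} (|C| − 1) + #{excessive positions}`, where a position
`(i,j)` (with `i ≤ j`, `M_{ij} ≠ 0`) is excessive if the diagonal variable `M_{ii} = X_{d i}`
or the diagonal variable `M_{jj} = X_{d j}` does not occur with nonzero coefficient
in `M_{ij}`. -/
noncomputable def matrixExcess {k : Type*} [Field k] {n h : ℕ}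
    (M : Matrix (Fin h) (Fin h) (MvPolynomial (Fin n) k)) (d : Fin h → Fin n) : ℕ :=
  (∑ᶠ c : Quotient (clusterSetoid M),
    (Nat.card {p : {p : Fin h × Fin h // p.1 ≤ p.2 ∧ M p.1 p.2 ≠ 0} //
      Quotient.mk (clusterSetoid M) p = c} - 1)) +
  Nat.card {p : {p : Fin h × Fin h // p.1 ≤ p.2 ∧ M p.1 p.2 ≠ 0} //
    d p.val.1 ∉ (M p.val.1 p.val.2).vars ∨ d p.val.2 ∉ (M p.val.1 p.val.2).vars}

/-! ### Auxiliary lemmas -/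

lemma TAE.single_of_degree_one {n : ℕ} (d : Fin n →₀ ℕ) (h : d.degree = 1) :
    ∃ v, v ∈ d.support ∧ d = Finsupp.single v 1 := by
  have hne : d ≠ 0 := by
    intro h0; rw [h0, map_zero] at h; exact one_ne_zero h.symm
  obtain ⟨v, hv⟩ := Finsupp.ne_iff.1 (hne)
  simp only [Finsupp.coe_zero, Pi.zero_apply] at hv
  have hvs : v ∈ d.support := Finsupp.mem_support_iff.2 hv
  have hdv : d v = 1 := le_antisymm (h ▸ Finsupp.le_degree v d) (Nat.one_le_iff_ne_zero.2 hv)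
  refine ⟨v, hvs, Finsupp.ext fun j => ?_⟩
  rcases eq_or_ne j v with rfl | hj
  · simp [hdv]
  · rw [Finsupp.single_apply, if_neg (Ne.symm hj)]
    by_contra hj0
    have hjs : j ∈ d.support := Finsupp.mem_support_iff.2 hj0
    have : 2 ≤ d.degree := by
      have hsub : ({v, j} : Finset (Fin n)) ⊆ d.support := by
        intro x hx; simp at hx; rcases hx with rfl | rfl <;> assumption
      calc 2 = ∑ _i ∈ ({v, j} : Finset (Fin n)), 1 := by simp [Finset.sum_pair (Ne.symm hj)]
        _ ≤ ∑ i ∈ ({v, j} : Finset (Fin n)), d i := by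
            refine Finset.sum_le_sum fun i hi => ?_
            simp at hi; rcases hi with rfl | rfl
            · omega
            · exact Nat.one_le_iff_ne_zero.2 hj0
        _ ≤ d.degree := Finset.sum_le_sum_of_subset hsub
    omega

lemma TAE.hom1_support {k : Type*} [Field k] {n : ℕ} {f : MvPolynomial (Fin n) k}
    (hf : f.IsHomogeneous 1) {m : Fin n →₀ ℕ} (hm : m ∈ f.support) :
    ∃ v, v ∈ f.vars ∧ m = Finsupp.single v 1 := by
  have h1 : m.degree = 1 := by
    rw [Finsupp.degree_eq_weight_one]; exact hf (mem_support_iff.1 hm)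
  obtain ⟨v, hvs, hsingle⟩ := TAE.single_of_degree_one m h1
  exact ⟨v, (mem_vars v).2 ⟨m, hm, hvs⟩, hsingle⟩

lemma TAE.vars_nonempty_of_hom1 {k : Type*} [Field k] {n : ℕ} {f : MvPolynomial (Fin n) k}
    (hf : f.IsHomogeneous 1) (hne : f ≠ 0) : ∃ v, v ∈ f.vars := by
  obtain ⟨m, hm⟩ := (support_nonempty.2 hne)
  obtain ⟨v, hv, -⟩ := TAE.hom1_support hf hm
  exact ⟨v, hv⟩

lemma TAE.aeval_hom1_scale {k : Type*} [Field k] {n : ℕ} {f : MvPolynomial (Fin n) k}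
    (hf : f.IsHomogeneous 1) (u : Fin n → k) (e : k) (he : ∀ v ∈ f.vars, u v = e) :
    aeval (fun v => C (u v) * X v) f = C e * f := by
  conv_lhs => rw [as_sum f, map_sum]
  have key : ∀ m ∈ f.support, aeval (fun v => C (u v) * X v) (monomial m (coeff m f))
      = C e * monomial m (coeff m f) := by
    intro m hm
    obtain ⟨v, hv, rfl⟩ := TAE.hom1_support hf hm
    rw [aeval_monomial, Finsupp.prod_single_index (by simp), pow_one, he v hv, monomial_eq,
      Finsupp.prod_single_index (by simp), pow_one, algebraMap_eq]
    ring
  rw [Finset.sum_congr rfl key, ← Finset.mul_sum, ← as_sum f]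

lemma TAE.prod_zpow_eq {G : Type*} [CommGroup G] (x : G) {ι : Type*} (s : Finset ι) (f : ι → ℤ) :
    ∏ i ∈ s, x ^ f i = x ^ ∑ i ∈ s, f i := by
  induction s using Finset.cons_induction with
  | empty => simp
  | cons a s ha ih => rw [Finset.prod_cons, Finset.sum_cons, zpow_add, ih]

lemma TAE.zpow_prod_eq {G : Type*} [CommGroup G] {ι : Type*} (s : Finset ι) (f : ι → G) (z : ℤ) :
    (∏ i ∈ s, f i) ^ z = ∏ i ∈ s, (f i) ^ z := by
  induction s using Finset.cons_induction with
  | empty => simp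
  | cons a s ha ih => rw [Finset.prod_cons, Finset.prod_cons, mul_zpow, ih]

lemma TAE.substMat_one {k : Type*} [CommSemiring k] {n : ℕ} (f : MvPolynomial (Fin n) k) :
    substMat (1 : Matrix (Fin n) (Fin n) k) f = f := by
  have hfun : (fun i => ∑ j, C ((1 : Matrix (Fin n) (Fin n) k) i j) * X j)
      = (X : Fin n → MvPolynomial (Fin n) k) := by
    funext i
    rw [Finset.sum_eq_single i (fun j _ hj => by rw [Matrix.one_apply_ne (Ne.symm hj)]; simp)
      (fun hi => absurd (Finset.mem_univ i) hi)]
    simp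
  rw [substMat, hfun]
  exact aeval_X_left_apply f

lemma TAE.substMat_diagonal {k : Type*} [CommSemiring k] {n : ℕ} (c : Fin n → k)
    (f : MvPolynomial (Fin n) k) :
    substMat (Matrix.diagonal c) f = aeval (fun i => C (c i) * X i) f := by
  have hfun : (fun i => ∑ j, C ((Matrix.diagonal c) i j) * X j) = fun i => C (c i) * X i := by
    funext i
    rw [Finset.sum_eq_single i (fun j _ hj => by rw [Matrix.diagonal_apply_ne _ (Ne.symm hj)]; simp)
      (fun hi => absurd (Finset.mem_univ i) hi)]
    simp
  rw [substMat, hfun]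

lemma TAE.card_nonrep_le_excess {k : Type*} [Field k] {n h : ℕ}
    (M : Matrix (Fin h) (Fin h) (MvPolynomial (Fin n) k)) (d : Fin h → Fin n) :
    Nat.card {p : {p : Fin h × Fin h // p.1 ≤ p.2 ∧ M p.1 p.2 ≠ 0} //
      (Quotient.mk (clusterSetoid M) p).out ≠ p} ≤ matrixExcess M d := by
  classical
  haveI : Fintype {p : Fin h × Fin h // p.1 ≤ p.2 ∧ M p.1 p.2 ≠ 0} := Fintype.ofFinite _
  haveI : Fintype (Quotient (clusterSetoid M)) := Fintype.ofFinite _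
  set Pos := {p : Fin h × Fin h // p.1 ≤ p.2 ∧ M p.1 p.2 ≠ 0} with hPos
  set S := clusterSetoid M with hS
  have h1 : Fintype.card Pos = ∑ c : Quotient S, Fintype.card {p : Pos // Quotient.mk S p = c} := by
    rw [← Fintype.card_sigma]
    exact (Fintype.card_congr (Equiv.sigmaFiberEquiv (Quotient.mk S))).symm
  have hfib : ∀ c : Quotient S, 1 ≤ Fintype.card {p : Pos // Quotient.mk S p = c} := by
    intro c
    exact Fintype.card_pos_iff.2 ⟨⟨c.out, Quotient.out_eq c⟩⟩
  have h2 : (∑ c : Quotient S, (Fintype.card {p : Pos // Quotient.mk S p = c} - 1))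
      + Fintype.card (Quotient S) = Fintype.card Pos := by
    rw [h1, ← Finset.card_univ, Finset.card_eq_sum_ones, ← Finset.sum_add_distrib]
    exact Finset.sum_congr rfl fun c _ => Nat.sub_add_cancel (hfib c)
  have hrep : Fintype.card {p : Pos // (Quotient.mk S p).out = p} = Fintype.card (Quotient S) := by
    refine Fintype.card_congr ⟨fun p => Quotient.mk S p.val, fun c => ⟨c.out, by rw [Quotient.out_eq]⟩,
      fun p => Subtype.ext p.property, fun c => Quotient.out_eq c⟩
  have h3 : Fintype.card {p : Pos // (Quotient.mk S p).out ≠ p}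
      = Fintype.card Pos - Fintype.card (Quotient S) := by
    rw [Fintype.card_subtype_compl, hrep]
  have h4 : Nat.card {p : Pos // (Quotient.mk S p).out ≠ p}
      = ∑ c : Quotient S, (Fintype.card {p : Pos // Quotient.mk S p = c} - 1) := by
    rw [Nat.card_eq_fintype_card]
    have := h3
    have := h2
    omega
  rw [h4, matrixExcess]
  refine le_trans ?_ (Nat.le_add_right _ _)
  rw [finsum_eq_sum_of_fintype]
  apply le_of_eq
  exact Finset.sum_congr rfl fun c _ => by rw [Nat.card_eq_fintype_card]

lemma TAE.exists_int_rep {n : ℕ} (x : Fin n → ℚ) :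
    ∃ (N : ℤ) (u : Fin n → ℤ), N ≠ 0 ∧ ∀ v, (u v : ℚ) = N * x v := by
  refine ⟨∏ v, ((x v).den : ℤ),
    fun v => (x v).num * ∏ j ∈ Finset.univ.erase v, ((x j).den : ℤ), ?_, ?_⟩
  · rw [Finset.prod_ne_zero_iff]
    intro v _
    exact_mod_cast (x v).den_nz
  · intro v
    have hden : ((x v).den : ℚ) * x v = (x v).num := by
      rw [mul_comm, Rat.mul_den_eq_num]
    push_cast
    rw [← Finset.mul_prod_erase Finset.univ (fun j => ((x j).den : ℚ)) (Finset.mem_univ v),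
      mul_right_comm, hden]

/-- Let `k` be an infinite field and `M` a symmetric `h×h` matrix of homogeneous
linear forms in `k[X₁,…,Xₙ]` whose diagonal entries are nonzero and linearly independent;
`ℓ(M)` is the dimension of the span of all upper-triangular entries.  Assume coordinates are
chosen so that each nonzero entry of `M` is a linear form in the variables `X₁,…,X_{ℓ(M)}`
(i.e. only the first `ℓ(M)` variables occur in entries of `M`), with the `h` diagonal entries
being `h` distinct variables.  With `δ(M)` the excess of `M`, the hypersurface
`X = {det M = 0} ⊆ P^{n−1}(k)` admits a linear, faithful torus action, diagonal in the
coordinates `X₁,…,Xₙ`, of rank at least `max(0, h − 1 + n − ℓ(M) − δ(M))`. -/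
theorem torus_action_with_excess {k : Type*} [Field k] [Infinite k] {n h ℓ : ℕ}
    (M : Matrix (Fin h) (Fin h) (MvPolynomial (Fin n) k))
    (hsymm : M.IsSymm)
    (hhom : ∀ i j : Fin h, (M i j).IsHomogeneous 1)
    (hdiag_ne : ∀ i : Fin h, M i i ≠ 0)
    (hdiag_ind : LinearIndependent k (fun i : Fin h => M i i))
    (hℓ : ℓ = Module.finrank k
      (Submodule.span k {f : MvPolynomial (Fin n) k | ∃ i j : Fin h, i ≤ j ∧ f = M i j}))
    (hvars : ∀ i j : Fin h, ∀ v ∈ (M i j).vars, (v : ℕ) < ℓ)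
    (d : Fin h → Fin n) (hd : Function.Injective d)
    (hdiag_var : ∀ i : Fin h, M i i = X (d i)) :
    ∃ r : ℕ, max 0 ((h : ℤ) - 1 + (n : ℤ) - (ℓ : ℤ) - (matrixExcess M d : ℤ)) ≤ (r : ℤ) ∧
      ∃ φ : (Fin r → kˣ) →* (Matrix (Fin n) (Fin n) k)ˣ,
        -- diagonal in the coordinates X₁,…,Xₙ
        (∀ t : Fin r → kˣ, Matrix.IsDiag ((φ t : Matrix (Fin n) (Fin n) k))) ∧
        -- the action preserves the hypersurface {det M = 0}
        (∀ t : Fin r → kˣ, ∃ c : kˣ,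
          substMat ((φ t : Matrix (Fin n) (Fin n) k)) M.det = (c : k) • M.det) ∧
        -- faithfulness
        (∀ t : Fin r → kˣ, IsScalarMat ((φ t : Matrix (Fin n) (Fin n) k)) → t = 1) := by
  classical
  rcases Nat.eq_zero_or_pos n with hn | hn
  · -- trivial case `n = 0`
    subst hn
    have hh : h = 0 := by
      by_contra hh
      exact (d ⟨0, Nat.pos_of_ne_zero hh⟩).elim0
    refine ⟨0, ?_, 1, ?_, ?_, ?_⟩
    · refine max_le le_rfl ?_
      have : (0:ℤ) ≤ (ℓ:ℤ) := Int.ofNat_nonneg ℓ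
      have : (0:ℤ) ≤ (matrixExcess M d : ℤ) := Int.ofNat_nonneg _
      subst hh
      simp only [Nat.cast_zero]
      omega
    · intro t
      simp only [MonoidHom.one_apply, Units.val_one]
      exact Matrix.isDiag_one
    · intro t
      refine ⟨1, ?_⟩
      simp only [MonoidHom.one_apply, Units.val_one, Units.val_one, one_smul]
      exact TAE.substMat_one _
    · intro t _
      funext m
      exact m.elim0
  · -- main case `0 < n`
    -- ## The weight lattice L
    set L : Submodule ℤ (Fin n → ℤ) :=
      { carrier := {w | ∀ i j : Fin h, ∀ v ∈ (M i j).vars, 2 * w v = w (d i) + w (d j)}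
        add_mem' := by
          intro a b ha hb i j v hv
          have h1 := ha i j v hv
          have h2 := hb i j v hv
          simp only [Pi.add_apply]
          ring_nf
          omega
        zero_mem' := by intro i j v hv; simp
        smul_mem' := by
          intro c w hw i j v hv
          have h1 := hw i j v hv
          simp only [Pi.smul_apply, smul_eq_mul]
          calc 2 * (c * w v) = c * (2 * w v) := by ring
            _ = c * (w (d i) + w (d j)) := by rw [h1]
            _ = c * w (d i) + c * w (d j) := by ring } with hLdef
    have hmemL : ∀ w : Fin n → ℤ, w ∈ L ↔
        (∀ i j : Fin h, ∀ v ∈ (M i j).vars, 2 * w v = w (d i) + w (d j)) := fun w => Iff.rfl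
    have honeL : (fun _ => (1:ℤ)) ∈ L := by
      rw [hmemL]; intro i j v hv; norm_num
    -- the diagonal variables
    have hdvars : ∀ i : Fin h, d i ∈ (M i i).vars := by
      intro i
      rw [hdiag_var i, vars_X]
      exact Finset.mem_singleton_self _
    have hdℓ : ∀ i : Fin h, (d i : ℕ) < ℓ := fun i => hvars i i (d i) (hdvars i)
    -- ## Positions, clusters, and the constraint map Φ over ℚ
    haveI : Fintype {p : Fin h × Fin h // p.1 ≤ p.2 ∧ M p.1 p.2 ≠ 0} := Fintype.ofFinite _
    set Pos := {p : Fin h × Fin h // p.1 ≤ p.2 ∧ M p.1 p.2 ≠ 0} with hPosdef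
    set SS := clusterSetoid M with hSSdef
    haveI : Fintype (Quotient SS) := Fintype.ofFinite _
    set sQ : Pos → ((Fin n → ℚ) →ₗ[ℚ] ℚ) :=
      (fun p => (LinearMap.proj (d p.val.1) : (Fin n → ℚ) →ₗ[ℚ] ℚ)
        + (LinearMap.proj (d p.val.2) : (Fin n → ℚ) →ₗ[ℚ] ℚ)) with hsQdef
    set Avar := {v : Fin n // (∃ p : Pos, v ∈ (M p.val.1 p.val.2).vars) ∧ v ∉ Set.range d}
      with hAvardef
    haveI : Fintype Avar := Fintype.ofFinite _
    have hposOf : ∀ a : Avar, ∃ p : Pos, a.val ∈ (M p.val.1 p.val.2).vars := fun a => a.property.1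
    set posOf : Avar → Pos := (fun a => (hposOf a).choose) with hposOfdef
    have hposOfSpec : ∀ a : Avar, a.val ∈ (M (posOf a).val.1 (posOf a).val.2).vars :=
      fun a => (hposOf a).choose_spec
    set NR := {p : Pos // (Quotient.mk SS p).out ≠ p} with hNRdef
    haveI : Fintype NR := Fintype.ofFinite _
    set Φ : (Fin n → ℚ) →ₗ[ℚ] ((Avar → ℚ) × (NR → ℚ)) :=
      LinearMap.prod
        (LinearMap.pi fun a => (2:ℚ) • (LinearMap.proj a.val : (Fin n → ℚ) →ₗ[ℚ] ℚ) - sQ (posOf a))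
        (LinearMap.pi fun p => sQ p.val - sQ (Quotient.mk SS p.val).out) with hΦdef
    -- relations inside a cluster
    have hshare : ∀ (p q : Pos) (v : Fin n), v ∈ (M p.val.1 p.val.2).vars →
        v ∈ (M q.val.1 q.val.2).vars → Quotient.mk SS p = Quotient.mk SS q := by
      intro p q v hvp hvq
      exact Quotient.sound (EqvGen.rel p q ⟨v, hvp, hvq⟩)
    -- elements of ker Φ satisfy all the constraints
    have hker : ∀ w : Fin n → ℚ, Φ w = 0 →
        ∀ i j : Fin h, ∀ v ∈ (M i j).vars, 2 * w v = w (d i) + w (d j) := by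
      intro w hw
      have hA : ∀ a : Avar, 2 * w a.val
          = w (d (posOf a).val.1) + w (d (posOf a).val.2) := by
        intro a
        have := congrFun (congrArg Prod.fst hw) a
        simp only [hΦdef, LinearMap.prod_apply, Function.prod, LinearMap.pi_apply,
          LinearMap.sub_apply, LinearMap.smul_apply, LinearMap.proj_apply, hsQdef,
          LinearMap.add_apply, Prod.fst_zero, Pi.zero_apply, smul_eq_mul] at this
        linarith
      have hNR0 : ∀ p : Pos, w (d p.val.1) + w (d p.val.2)
          = w (d (Quotient.mk SS p).out.val.1) + w (d (Quotient.mk SS p).out.val.2) := by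
        intro p
        by_cases hp : (Quotient.mk SS p).out = p
        · rw [hp]
        · have := congrFun (congrArg Prod.snd hw) ⟨p, hp⟩
          simp only [hΦdef, LinearMap.prod_apply, Function.prod, LinearMap.pi_apply,
            LinearMap.sub_apply, LinearMap.proj_apply, hsQdef,
            LinearMap.add_apply, Prod.snd_zero, Pi.zero_apply] at this
          linarith
      have hclus : ∀ p q : Pos, Quotient.mk SS p = Quotient.mk SS q →
          w (d p.val.1) + w (d p.val.2) = w (d q.val.1) + w (d q.val.2) := by
        intro p q hpq
        rw [hNR0 p, hNR0 q, hpq]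
      have main : ∀ i j : Fin h, i ≤ j → ∀ v ∈ (M i j).vars,
          2 * w v = w (d i) + w (d j) := by
        intro i j hij v hv
        have hMne : M i j ≠ 0 := by
          intro h0
          rw [h0] at hv
          simp [vars_0] at hv
        set p : Pos := ⟨(i,j), hij, hMne⟩ with hpdef
        by_cases hvr : v ∈ Set.range d
        · obtain ⟨i₀, rfl⟩ := hvr
          set q : Pos := ⟨(i₀,i₀), le_refl _, hdiag_ne i₀⟩ with hqdef
          have hq : Quotient.mk SS p = Quotient.mk SS q :=
            hshare p q (d i₀) hv (hdvars i₀)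
          have := hclus p q hq
          simp only [hpdef, hqdef] at this
          linarith
        · set a : Avar := ⟨v, ⟨⟨p, hv⟩, hvr⟩⟩ with hadef
          have h1 := hA a
          have hq : Quotient.mk SS (posOf a) = Quotient.mk SS p :=
            hshare (posOf a) p v (hposOfSpec a) hv
          have h2 := hclus (posOf a) p hq
          simp only [hpdef] at h2
          rw [h1, h2]
      intro i j v hv
      rcases le_total i j with hij | hji
      · exact main i j hij v hv
      · have hv' : v ∈ (M j i).vars := by rw [hsymm.apply i j]; exact hv
        have := main j i hji v hv'
        linarith
    -- ## dimension bound for ker Φ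
    set ρ' := Module.finrank ℚ ↥(LinearMap.ker Φ) with hρ'def
    have hdim : n ≤ ρ' + (Fintype.card Avar + Fintype.card NR) := by
      have h1 := LinearMap.finrank_range_add_finrank_ker Φ
      have h2 : Module.finrank ℚ ↥(LinearMap.range Φ)
          ≤ Fintype.card Avar + Fintype.card NR := by
        have h3 := Submodule.finrank_le (LinearMap.range Φ)
        rwa [Module.finrank_prod, Module.finrank_pi, Module.finrank_pi] at h3
      rw [Module.finrank_pi, Fintype.card_fin] at h1
      omega
    have hcardA : Fintype.card Avar + h ≤ ℓ := by
      have hinj : Function.Injective (fun x : Avar ⊕ Fin h =>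
          Sum.elim (fun a : Avar => (⟨(a.val : ℕ), hvars _ _ _ (hposOfSpec a)⟩ : Fin ℓ))
            (fun i : Fin h => (⟨(d i : ℕ), hdℓ i⟩ : Fin ℓ)) x) := by
        intro x y hxy
        rcases x with a | i <;> rcases y with b | j
        · simp only [Sum.elim_inl, Fin.mk.injEq] at hxy
          exact congrArg Sum.inl (Subtype.ext (Fin.ext hxy))
        · simp only [Sum.elim_inl, Sum.elim_inr, Fin.mk.injEq] at hxy
          exact absurd ⟨j, Fin.ext hxy.symm⟩ a.property.2
        · simp only [Sum.elim_inl, Sum.elim_inr, Fin.mk.injEq] at hxy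
          exact absurd ⟨i, Fin.ext hxy⟩ b.property.2
        · simp only [Sum.elim_inr, Fin.mk.injEq] at hxy
          exact congrArg Sum.inr (hd (Fin.ext hxy))
      have := Fintype.card_le_of_injective _ hinj
      simpa [Fintype.card_sum] using this
    have hcardNR : Nat.card NR ≤ matrixExcess M d := TAE.card_nonrep_le_excess M d
    have hNRcard : Nat.card NR = Fintype.card NR := Nat.card_eq_fintype_card
    -- ## an integral linearly independent family in L of size ρ'
    have hBQ := Module.finBasis ℚ ↥(LinearMap.ker Φ)
    have hchoice : ∀ i : Fin ρ', ∃ (u : Fin n → ℤ) (N : ℤ), u ∈ L ∧ N ≠ 0 ∧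
        ∀ v, (u v : ℚ) = N * (((hBQ i : ↥(LinearMap.ker Φ)) : Fin n → ℚ) v) := by
      intro i
      obtain ⟨N, u, hN, hu⟩ := TAE.exists_int_rep ((hBQ i : ↥(LinearMap.ker Φ)) : Fin n → ℚ)
      refine ⟨u, N, ?_, hN, hu⟩
      rw [hmemL]
      intro i' j' v hv
      have hc := hker _ (LinearMap.mem_ker.1 (hBQ i).2) i' j' v hv
      have hcast : ((2 * u v : ℤ) : ℚ) = ((u (d i') + u (d j') : ℤ) : ℚ) := by
        push_cast
        rw [hu v, hu (d i'), hu (d j')]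
        linear_combination N * hc
      exact_mod_cast hcast
    choose uvec Nv huL hNv hval using hchoice
    have hliQ : LinearIndependent ℚ
        (fun i : Fin ρ' => ((hBQ i : ↥(LinearMap.ker Φ)) : Fin n → ℚ)) :=
      (hBQ.linearIndependent).map' (LinearMap.ker Φ).subtype (Submodule.ker_subtype _)
    have hliQ2 : LinearIndependent ℚ (fun i : Fin ρ' => fun v => ((uvec i v : ℚ))) := by
      have heq : (fun i : Fin ρ' => fun v => ((uvec i v : ℚ)))
          = (fun i : Fin ρ' => Units.mk0 ((Nv i : ℚ)) (by exact_mod_cast hNv i))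
            • (fun i : Fin ρ' => ((hBQ i : ↥(LinearMap.ker Φ)) : Fin n → ℚ)) := by
        funext i; funext v
        simp only [Pi.smul_apply', Units.smul_def, Units.val_mk0, Pi.smul_apply, smul_eq_mul]
        exact hval i v
      rw [heq]
      exact hliQ.units_smul _
    have hliZQ : LinearIndependent ℤ (fun i : Fin ρ' => fun v => ((uvec i v : ℚ))) := by
      refine LinearIndependent.restrict_scalars ?_ hliQ2
      intro a b hab
      simpa using hab
    set castL : (Fin n → ℤ) →ₗ[ℤ] (Fin n → ℚ) :=
      { toFun := fun w v => (w v : ℚ),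
        map_add' := by intro a b; funext v; push_cast; simp
        map_smul' := by intro c a; funext v; push_cast; simp } with hcastLdef
    have hliZ : LinearIndependent ℤ uvec := by
      have hcomp : (⇑castL ∘ uvec) = fun i => fun v => ((uvec i v : ℚ)) := rfl
      exact LinearIndependent.of_comp castL (hcomp ▸ hliZQ)
    have hliL : LinearIndependent ℤ (fun i : Fin ρ' => (⟨uvec i, huL i⟩ : ↥L)) := by
      refine LinearIndependent.of_comp L.subtype ?_
      exact hliZ
    -- ## splitting off L
    haveI : Module.Finite ℤ ((Fin n → ℤ) ⧸ L) :=
      Module.Finite.of_surjective L.mkQ (Submodule.Quotient.mk_surjective L)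
    haveI : NoZeroSMulDivisors ℤ ((Fin n → ℤ) ⧸ L) := by
      refine ⟨fun {c x} hcx => ?_⟩
      rcases eq_or_ne c 0 with rfl | hc
      · exact Or.inl rfl
      right
      obtain ⟨y, rfl⟩ := Submodule.Quotient.mk_surjective L x
      rw [Submodule.Quotient.mk_eq_zero]
      have hmem : c • y ∈ L := by
        rw [← Submodule.Quotient.mk_eq_zero, Submodule.Quotient.mk_smul]
        exact hcx
      rw [hmemL] at hmem ⊢
      intro i j v hv
      have h1 := hmem i j v hv
      simp only [Pi.smul_apply, smul_eq_mul] at h1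
      have h2 : c * (2 * y v) = c * (y (d i) + y (d j)) := by ring_nf; ring_nf at h1; linarith
      exact mul_left_cancel₀ hc h2
    haveI : Module.Free ℤ ((Fin n → ℤ) ⧸ L) := Module.free_of_finite_type_torsion_free'
    obtain ⟨s₁, hs₁⟩ := Module.projective_lifting_property L.mkQ LinearMap.id
      (Submodule.Quotient.mk_surjective L)
    have hπmem : ∀ x, x - s₁ (L.mkQ x) ∈ L := by
      intro x
      have h0 : L.mkQ (x - s₁ (L.mkQ x)) = 0 := by
        rw [map_sub]
        have h1 := LinearMap.congr_fun hs₁ (L.mkQ x)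
        simp only [LinearMap.comp_apply, LinearMap.id_apply] at h1
        rw [h1, sub_self]
      rwa [Submodule.mkQ_apply, Submodule.Quotient.mk_eq_zero] at h0
    set π : (Fin n → ℤ) →ₗ[ℤ] ↥L :=
      (LinearMap.id - s₁ ∘ₗ L.mkQ).codRestrict L hπmem with hπdef
    have hπL : ∀ x : ↥L, π x.val = x := by
      intro x
      apply Subtype.ext
      simp only [hπdef, LinearMap.codRestrict_apply, LinearMap.sub_apply, LinearMap.id_apply,
        LinearMap.comp_apply]
      have h0 : L.mkQ x.val = 0 := by
        rw [Submodule.mkQ_apply, Submodule.Quotient.mk_eq_zero]; exact x.2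
      rw [h0, map_zero, sub_zero]
    -- ## splitting off the all-ones vector inside L
    set oneL : ↥L := ⟨fun _ => (1:ℤ), honeL⟩ with honeLdef
    set N₂ : Submodule ℤ ↥L := Submodule.span ℤ {oneL} with hN₂def
    haveI : Module.Finite ℤ ↥L := Module.Finite.iff_fg.2 (IsNoetherian.noetherian L)
    haveI : Module.Finite ℤ (↥L ⧸ N₂) :=
      Module.Finite.of_surjective N₂.mkQ (Submodule.Quotient.mk_surjective N₂)
    set v₀ : Fin n := ⟨0, hn⟩ with hv₀def
    haveI : NoZeroSMulDivisors ℤ (↥L ⧸ N₂) := by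
      refine ⟨fun {c x} hcx => ?_⟩
      rcases eq_or_ne c 0 with rfl | hc
      · exact Or.inl rfl
      right
      obtain ⟨y, rfl⟩ := Submodule.Quotient.mk_surjective N₂ x
      rw [Submodule.Quotient.mk_eq_zero]
      have hmem : c • y ∈ N₂ := by
        rw [← Submodule.Quotient.mk_eq_zero, Submodule.Quotient.mk_smul]
        exact hcx
      rw [hN₂def, Submodule.mem_span_singleton] at hmem ⊢
      obtain ⟨a, ha⟩ := hmem
      have hcoord : ∀ v : Fin n, a = c * (y.val v) := by
        intro v
        have h1 := congrArg (fun z : ↥L => (z.val v)) ha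
        simpa [honeLdef, Pi.smul_apply, smul_eq_mul] using h1
      refine ⟨y.val v₀, ?_⟩
      apply Subtype.ext
      funext v
      have h3 : c * y.val v = c * y.val v₀ := by rw [← hcoord v, ← hcoord v₀]
      have h4 := mul_left_cancel₀ hc h3
      simp [honeLdef, Pi.smul_apply, smul_eq_mul, h4]
    haveI : Module.Free ℤ (↥L ⧸ N₂) := Module.free_of_finite_type_torsion_free'
    obtain ⟨s₂, hs₂⟩ := Module.projective_lifting_property N₂.mkQ LinearMap.id
      (Submodule.Quotient.mk_surjective N₂)
    set r := Fintype.card (Module.Free.ChooseBasisIndex ℤ (↥L ⧸ N₂)) with hrdef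
    set cb : Module.Basis (Fin r) ℤ (↥L ⧸ N₂) :=
      (Module.Free.chooseBasis ℤ (↥L ⧸ N₂)).reindex (Fintype.equivFin _) with hcbdef
    set wvec : Fin r → (Fin n → ℤ) := fun m => (s₂ (cb m)).val with hwvecdef
    have hwL : ∀ m, wvec m ∈ L := fun m => (s₂ (cb m)).2
    set xdual : Fin r → ((Fin n → ℤ) →ₗ[ℤ] ℤ) :=
      fun m => cb.coord m ∘ₗ N₂.mkQ ∘ₗ π with hxdualdef
    have hsection : ∀ q : ↥L ⧸ N₂, N₂.mkQ (s₂ q) = q := by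
      intro q
      have := LinearMap.congr_fun hs₂ q
      simpa using this
    have hxw : ∀ m m' : Fin r, xdual m (wvec m') = if m' = m then 1 else 0 := by
      intro m m'
      simp only [hxdualdef, LinearMap.comp_apply]
      rw [hwvecdef]
      rw [hπL (s₂ (cb m')), hsection (cb m'), Module.Basis.coord_apply, Module.Basis.repr_self]
      exact Finsupp.single_apply
    have hxone : ∀ m : Fin r, xdual m (fun _ => (1:ℤ)) = 0 := by
      intro m
      simp only [hxdualdef, LinearMap.comp_apply]
      have h1 : π (fun _ => (1:ℤ)) = oneL := hπL oneL
      rw [h1]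
      have h2 : N₂.mkQ oneL = 0 := (Submodule.Quotient.mk_eq_zero N₂).2
        (Submodule.mem_span_singleton_self oneL)
      rw [h2, map_zero]
    -- ## rank bound: ρ' ≤ 1 + r
    set τ : ↥L →ₗ[ℤ] ℤ :=
      (LinearMap.proj v₀ : (Fin n → ℤ) →ₗ[ℤ] ℤ) ∘ₗ L.subtype ∘ₗ
        (LinearMap.id - s₂ ∘ₗ N₂.mkQ) with hτdef
    set jmap : ↥L →ₗ[ℤ] (ℤ × (↥L ⧸ N₂)) := LinearMap.prod τ N₂.mkQ with hjdef
    have hjker : LinearMap.ker jmap = ⊥ := by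
      refine LinearMap.ker_eq_bot'.2 fun x hx => ?_
      have hx1 : τ x = 0 := congrArg Prod.fst hx
      have hx2 : N₂.mkQ x = 0 := congrArg Prod.snd hx
      have hxN : x ∈ N₂ := by
        rwa [Submodule.mkQ_apply, Submodule.Quotient.mk_eq_zero] at hx2
      rw [hN₂def, Submodule.mem_span_singleton] at hxN
      obtain ⟨a, rfl⟩ := hxN
      have hτa : τ (a • oneL) = a := by
        simp only [hτdef, LinearMap.comp_apply, LinearMap.sub_apply, LinearMap.id_apply]
        have hmem : a • oneL ∈ N₂ := by
          rw [hN₂def]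
          exact Submodule.smul_mem _ a (Submodule.mem_span_singleton_self oneL)
        have h0 : N₂.mkQ (a • oneL) = 0 := by
          rw [Submodule.mkQ_apply, Submodule.Quotient.mk_eq_zero]; exact hmem
        rw [h0, map_zero, sub_zero]
        simp [honeLdef]
      rw [hτa] at hx1
      rw [hx1, zero_smul]
    have hρr : ρ' ≤ 1 + r := by
      have hli2 := hliL.map' jmap hjker
      have hcard := hli2.fintype_card_le_finrank
      rw [Fintype.card_fin] at hcard
      rw [Module.finrank_prod, Module.finrank_self,
        Module.finrank_eq_card_chooseBasisIndex ℤ (↥L ⧸ N₂)] at hcard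
      exact hcard
    -- ## the torus action
    set U : (Fin r → kˣ) → Fin n → kˣ := fun t v => ∏ m, (t m) ^ (wvec m v) with hUdef
    have hUmul : ∀ t t' : Fin r → kˣ, ∀ v, U (t * t') v = U t v * U t' v := by
      intro t t' v
      rw [hUdef]
      simp only [Pi.mul_apply]
      rw [← Finset.prod_mul_distrib]
      exact Finset.prod_congr rfl fun m _ => mul_zpow _ _ _
    set φfun : (Fin r → kˣ) → (Matrix (Fin n) (Fin n) k)ˣ := fun t =>
      ⟨Matrix.diagonal (fun v => (U t v : k)),
       Matrix.diagonal (fun v => (((U t v)⁻¹ : kˣ) : k)),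
       by rw [Matrix.diagonal_mul_diagonal]; convert Matrix.diagonal_one using 2; simp,
       by rw [Matrix.diagonal_mul_diagonal]; convert Matrix.diagonal_one using 2; simp⟩
      with hφfundef
    set φ : (Fin r → kˣ) →* (Matrix (Fin n) (Fin n) k)ˣ :=
      { toFun := φfun,
        map_one' := by
          apply Units.ext
          show Matrix.diagonal (fun v => (U 1 v : k)) = 1
          have hU1 : ∀ v, U 1 v = 1 := by intro v; rw [hUdef]; simp
          have : (fun v => (U 1 v : k)) = fun _ => (1:k) := by funext v; rw [hU1 v]; rfl
          rw [this]
          exact Matrix.diagonal_one,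
        map_mul' := by
          intro t t'
          apply Units.ext
          show Matrix.diagonal (fun v => (U (t * t') v : k))
            = Matrix.diagonal (fun v => (U t v : k)) * Matrix.diagonal (fun v => (U t' v : k))
          rw [Matrix.diagonal_mul_diagonal]
          exact congrArg Matrix.diagonal
            (funext fun v => by rw [hUmul t t' v, Units.val_mul]) } with hφdef
    refine ⟨r, ?_, φ, ?_, ?_, ?_⟩
    · refine max_le (Int.ofNat_nonneg r) ?_
      omega
    · intro t
      exact Matrix.isDiag_diagonal _
    · -- the action preserves the determinant up to scalar
      intro t
      refine ⟨∏ m, (t m) ^ (∑ i, wvec m (d i)), ?_⟩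
      have hval : ((φ t : (Matrix (Fin n) (Fin n) k)ˣ) : Matrix (Fin n) (Fin n) k)
          = Matrix.diagonal (fun v => (U t v : k)) := rfl
      rw [hval, TAE.substMat_diagonal]
      have hdet := RingHom.map_det
        ((aeval (fun v => C ((U t v : k)) * X v) : MvPolynomial (Fin n) k →ₐ[k] MvPolynomial (Fin n) k)
          : MvPolynomial (Fin n) k →+* MvPolynomial (Fin n) k) M
      rw [show (aeval (fun v => C ((U t v : k)) * X v)) M.det
          = (((aeval (fun v => C ((U t v : k)) * X v) : MvPolynomial (Fin n) k →ₐ[k] MvPolynomial (Fin n) k)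
          : MvPolynomial (Fin n) k →+* MvPolynomial (Fin n) k).mapMatrix M).det from hdet]
      rw [Matrix.det_apply, Matrix.det_apply, Finset.smul_sum]
      refine Finset.sum_congr rfl fun σ _ => ?_
      rw [Units.smul_def, Units.smul_def, smul_comm]
      congr 1
      by_cases hz : ∃ i, M (σ i) i = 0
      · obtain ⟨i₀, hi₀⟩ := hz
        have hL0 : (∏ i, (((aeval (fun v => C ((U t v : k)) * X v) : MvPolynomial (Fin n) k →ₐ[k] MvPolynomial (Fin n) k)
            : MvPolynomial (Fin n) k →+* MvPolynomial (Fin n) k).mapMatrix M) (σ i) i) = 0 :=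
          Finset.prod_eq_zero (Finset.mem_univ i₀)
            (by simp [RingHom.mapMatrix_apply, Matrix.map_apply, hi₀])
        have hR0 : (∏ i, M (σ i) i) = 0 := Finset.prod_eq_zero (Finset.mem_univ i₀) hi₀
        rw [hL0, hR0, smul_zero]
      · push_neg at hz
        have hvars0 : ∀ i, ∃ v, v ∈ (M (σ i) i).vars := fun i =>
          TAE.vars_nonempty_of_hom1 (hhom (σ i) i) (hz i)
        choose v₁ hv₁ using hvars0
        have hwconst : ∀ i, ∀ v ∈ (M (σ i) i).vars, ∀ m, wvec m v = wvec m (v₁ i) := by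
          intro i v hv m
          have hm := (hmemL (wvec m)).1 (hwL m)
          have e1 := hm (σ i) i v hv
          have e2 := hm (σ i) i (v₁ i) (hv₁ i)
          omega
        have hFentry : ∀ i, (aeval (fun v => C ((U t v : k)) * X v)) (M (σ i) i)
            = C ((U t (v₁ i) : k)) * M (σ i) i := by
          intro i
          refine TAE.aeval_hom1_scale (hhom (σ i) i) _ _ ?_
          intro v hv
          congr 1
          rw [hUdef]
          exact Finset.prod_congr rfl fun m _ => by rw [hwconst i v hv m]
        have hprodF : (∏ i, (((aeval (fun v => C ((U t v : k)) * X v) : MvPolynomial (Fin n) k →ₐ[k] MvPolynomial (Fin n) k)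
            : MvPolynomial (Fin n) k →+* MvPolynomial (Fin n) k).mapMatrix M) (σ i) i)
            = C (∏ i, (U t (v₁ i) : k)) * ∏ i, M (σ i) i := by
          have step : ∀ i : Fin h, (((aeval (fun v => C ((U t v : k)) * X v) : MvPolynomial (Fin n) k →ₐ[k] MvPolynomial (Fin n) k)
              : MvPolynomial (Fin n) k →+* MvPolynomial (Fin n) k).mapMatrix M) (σ i) i
              = C ((U t (v₁ i) : k)) * M (σ i) i := by
            intro i
            rw [RingHom.mapMatrix_apply, Matrix.map_apply]
            exact hFentry i
          rw [Finset.prod_congr rfl fun i _ => step i, Finset.prod_mul_distrib, ← map_prod]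
        rw [hprodF]
        have hscal : (∏ i, (U t (v₁ i))) = ∏ m, (t m) ^ (∑ i, wvec m (d i)) := by
          rw [hUdef]
          rw [Finset.prod_comm]
          refine Finset.prod_congr rfl fun m _ => ?_
          rw [TAE.prod_zpow_eq]
          congr 1
          have hm := (hmemL (wvec m)).1 (hwL m)
          have hdouble : 2 * (∑ i, wvec m (v₁ i)) = 2 * (∑ i, wvec m (d i)) := by
            rw [Finset.mul_sum, Finset.mul_sum]
            calc ∑ i, 2 * wvec m (v₁ i)
                = ∑ i, (wvec m (d (σ i)) + wvec m (d i)) :=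
                  Finset.sum_congr rfl fun i _ => hm (σ i) i (v₁ i) (hv₁ i)
              _ = (∑ i, wvec m (d (σ i))) + ∑ i, wvec m (d i) := Finset.sum_add_distrib
              _ = (∑ i, wvec m (d i)) + ∑ i, wvec m (d i) := by
                  rw [Equiv.sum_comp σ (fun i => wvec m (d i))]
              _ = ∑ i, 2 * wvec m (d i) := by
                  rw [← Finset.sum_add_distrib]
                  exact Finset.sum_congr rfl fun i _ => (two_mul _).symm
          omega
        have hcoe : (∏ i, (U t (v₁ i) : k)) = ((∏ m, (t m) ^ (∑ i, wvec m (d i)) : kˣ) : k) := by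
          rw [← hscal]
          exact (map_prod (Units.coeHom k) _ _).symm

        rw [hcoe, smul_eq_C_mul]
    · -- faithfulness
      intro t hscalar
      obtain ⟨c₀, hc₀⟩ := hscalar
      have hUc : ∀ v : Fin n, (U t v : k) = c₀ := by
        intro v
        have h1 := congrFun (congrFun hc₀ v) v
        have hval : ((φ t : (Matrix (Fin n) (Fin n) k)ˣ) : Matrix (Fin n) (Fin n) k) v v
            = (U t v : k) := Matrix.diagonal_apply_eq _ v
        rw [hval] at h1
        rw [h1]
        simp [Matrix.smul_apply, Matrix.one_apply_eq]
      have hUeq : ∀ v v' : Fin n, U t v = U t v' := by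
        intro v v'
        apply Units.ext
        rw [hUc v, hUc v']
      have hxsum : ∀ x : (Fin n → ℤ) →ₗ[ℤ] ℤ,
          x (fun _ => (1:ℤ)) = ∑ v, x (fun j => if v = j then 1 else 0) := by
        intro x
        have := LinearMap.pi_apply_eq_sum_univ x (fun _ => (1:ℤ))
        simpa using this
      have hxw' : ∀ x : (Fin n → ℤ) →ₗ[ℤ] ℤ, ∀ m' : Fin r,
          x (wvec m') = ∑ v, wvec m' v * x (fun j => if v = j then 1 else 0) := by
        intro x m'
        have := LinearMap.pi_apply_eq_sum_univ x (wvec m')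
        simpa [smul_eq_mul] using this
      have hmain : ∀ x : (Fin n → ℤ) →ₗ[ℤ] ℤ,
          ∏ m', (t m') ^ (x (wvec m'))
            = ∏ v, (U t v) ^ (x (fun j => if v = j then 1 else 0)) := by
        intro x
        calc ∏ m', (t m') ^ (x (wvec m'))
            = ∏ m', ∏ v, (t m') ^ (wvec m' v * x (fun j => if v = j then 1 else 0)) := by
              refine Finset.prod_congr rfl fun m' _ => ?_
              rw [hxw' x m', ← TAE.prod_zpow_eq]
          _ = ∏ v, ∏ m', (t m') ^ (wvec m' v * x (fun j => if v = j then 1 else 0)) :=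
              Finset.prod_comm
          _ = ∏ v, (U t v) ^ (x (fun j => if v = j then 1 else 0)) := by
              refine Finset.prod_congr rfl fun v _ => ?_
              rw [hUdef]
              rw [TAE.zpow_prod_eq]
              exact Finset.prod_congr rfl fun m' _ => zpow_mul _ _ _
      funext m
      have hx := hmain (xdual m)
      have hLHS : ∏ m', (t m') ^ ((xdual m) (wvec m')) = t m := by
        rw [Finset.prod_eq_single m (fun m' _ hm' => by rw [hxw m m', if_neg hm', zpow_zero])
          (fun hm => absurd (Finset.mem_univ m) hm)]
        rw [hxw m m, if_pos rfl, zpow_one]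
      have hRHS : ∏ v, (U t v) ^ ((xdual m) (fun j => if v = j then 1 else 0)) = 1 := by
        calc ∏ v, (U t v) ^ ((xdual m) (fun j => if v = j then 1 else 0))
            = ∏ v, (U t v₀) ^ ((xdual m) (fun j => if v = j then 1 else 0)) :=
              Finset.prod_congr rfl fun v _ => by rw [hUeq v v₀]
          _ = (U t v₀) ^ (∑ v, (xdual m) (fun j => if v = j then 1 else 0)) :=
              TAE.prod_zpow_eq _ _ _
          _ = (U t v₀) ^ ((xdual m) (fun _ => (1:ℤ))) := by rw [← hxsum]
          _ = 1 := by rw [hxone m, zpow_zero]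
      show t m = (1 : Fin r → kˣ) m
      rw [Pi.one_apply]
      rw [← hLHS, hx, hRHS]
end

section
/- Let k be a field of characteristic 0, Γ a finite connected multigraph with h₁(Γ) ≥ 1, and B any ℤ-basis of H₁(Γ,ℤ). Then the h₁(Γ) diagonal entries of the matrix M(Γ)_B are linearly independent elements of the space of linear forms k[X_e : e ∈ E(Γ)]₁. -/
/-- A finite multigraph with an orientation of its edges: vertex type `V`, edge type `E`,
each edge `e` having a source `src e` and a target `tgt e`. -/
structure Multigraph (V E : Type) where
  src : E → V
  tgt : E → V

namespace Multigraph

/-- Two vertices are adjacent via an edge satisfying the predicate `P` (ignoring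
orientation). -/
def Adj {V E : Type} (G : Multigraph V E) (P : E → Prop) (a b : V) : Prop :=
  ∃ e, P e ∧ ((G.src e = a ∧ G.tgt e = b) ∨ (G.src e = b ∧ G.tgt e = a))

/-- All vertices are joined by walks using only edges satisfying `P`. -/
def ConnectedOn {V E : Type} (G : Multigraph V E) (P : E → Prop) : Prop :=
  ∀ a b : V, Relation.ReflTransGen (G.Adj P) a b

/-- The multigraph is connected. -/
def Connected {V E : Type} (G : Multigraph V E) : Prop :=
  Nonempty V ∧ G.ConnectedOn fun _ => True

/-- `T` is (the edge set of) a spanning tree: connecting all vertices, with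
`#T = #V − 1` edges. -/
def IsSpanningTree {V E : Type} [Fintype V] (G : Multigraph V E) (T : Finset E) : Prop :=
  G.ConnectedOn (· ∈ T) ∧ T.card + 1 = Fintype.card V

open MvPolynomial in
open Classical in
/-- The graph (Kirchhoff) polynomial `P(Γ) = Σ_T ∏_{e ∉ T} X_e`, the sum being over all
spanning trees `T` of `Γ` (it is `0` if there is no spanning tree). -/
noncomputable def graphPolynomial {V E : Type} (k : Type*) [CommRing k] [Fintype V]
    [Fintype E] (G : Multigraph V E) : MvPolynomial E k :=
  ∑ T ∈ Finset.univ.filter (fun T : Finset E => G.IsSpanningTree T), ∏ e ∈ Tᶜ, X e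

open Classical in
/-- The boundary map `∂ : R^E → R^V`, sending an edge to (source) − (target). -/
noncomputable def boundary {V E : Type} (G : Multigraph V E) (R : Type*) [CommRing R]
    [Fintype E] : (E → R) →ₗ[R] (V → R) where
  toFun x v := ∑ e, x e * ((if G.src e = v then 1 else 0) - (if G.tgt e = v then 1 else 0))
  map_add' x y := by
    funext v
    simp [add_mul, Finset.sum_add_distrib]
  map_smul' c x := by
    funext v
    simp [Finset.mul_sum, mul_assoc]

/-- The cycle space `H₁(Γ, R) = ker ∂`. -/
noncomputable def cycleSpace {V E : Type} (G : Multigraph V E) (R : Type*) [CommRing R]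
    [Fintype E] : Submodule R (E → R) :=
  LinearMap.ker (G.boundary R)

open MvPolynomial in
/-- The matrix `M(Γ)_B = Σ_e X_e M_e` associated to a `ℤ`-basis `B` of `H₁(Γ, ℤ)`, where
`M_e` is the Gram matrix of the rank-1 bilinear form `b_e = (l_e·)(l_e·)` in the basis `B`;
its `(i,j)` entry is the linear form `Σ_e (B i)_e (B j)_e X_e`, with coefficients cast
into `k`. -/
noncomputable def graphMatrix {V E : Type} (G : Multigraph V E) (k : Type*) [CommRing k]
    [Fintype E] {ι : Type*} (B : Module.Basis ι ℤ (G.cycleSpace ℤ)) :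
    Matrix ι ι (MvPolynomial E k) :=
  Matrix.of fun i j => ∑ e, C ((((B i).val e * (B j).val e : ℤ) : k)) * X e

/-- The vertex `v` is an endpoint of some edge in `S`. -/
def touches {V E : Type} (G : Multigraph V E) (S : Set E) (v : V) : Prop :=
  ∃ e ∈ S, G.src e = v ∨ G.tgt e = v

/-- The vertex set of the subgraph spanned by the edge set `S`. -/
def verts {V E : Type} (G : Multigraph V E) (S : Set E) : Set V :=
  {v | G.touches S v}

/-- The subgraph spanned by the edge set `S` is connected. -/
def EdgeConnected {V E : Type} (G : Multigraph V E) (S : Set E) : Prop :=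
  ∀ a b : V, G.touches S a → G.touches S b → Relation.ReflTransGen (G.Adj (· ∈ S)) a b

open Classical in
/-- The degree of the vertex `v` in the subgraph spanned by the edge set `S`
(a loop counts twice). -/
noncomputable def degreeIn {V E : Type} (G : Multigraph V E) [Fintype E] (S : Set E)
    (v : V) : ℕ :=
  ∑ e ∈ S.toFinset, ((if G.src e = v then 1 else 0) + (if G.tgt e = v then 1 else 0))

/-- `S` is (the edge set of) a simple cycle: nonempty, connected, and every vertex it
touches has degree exactly 2 in it. -/
def IsSimpleCycle {V E : Type} (G : Multigraph V E) [Fintype E] (S : Set E) : Prop :=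
  S.Nonempty ∧ G.EdgeConnected S ∧ ∀ v : V, G.touches S v → G.degreeIn S v = 2

/-- The edge set `S` contains no simple cycle (the subgraph it spans is a forest,
i.e. `h₁ = 0`). -/
def IsAcyclicSet {V E : Type} (G : Multigraph V E) [Fintype E] (S : Set E) : Prop :=
  ∀ C : Set E, C ⊆ S → ¬G.IsSimpleCycle C

/-- A decomposition of `Γ` as a successive gluing of polygons (simple cycles)
`Δ_0, …, Δ_{h−1}`: each `Δ_i` (for `i > 0`) is glued to the union of the previous
polygons along a nonempty, connected, proper set of edges of `Δ_i`, and no edge is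
used twice for gluing. -/
structure PolygonalDecomposition {V E : Type} [Fintype E] (G : Multigraph V E) where
  h : ℕ
  poly : Fin h → Set E
  cycle : ∀ i, G.IsSimpleCycle (poly i)
  covers : ∀ e : E, ∃ i, e ∈ poly i
  glue_nonempty : ∀ i : Fin h, 0 < (i : ℕ) → (poly i ∩ ⋃ j < i, poly j).Nonempty
  glue_connected : ∀ i : Fin h, 0 < (i : ℕ) → G.EdgeConnected (poly i ∩ ⋃ j < i, poly j)
  glue_proper : ∀ i : Fin h, 0 < (i : ℕ) → poly i ∩ ⋃ j < i, poly j ≠ poly i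
  glue_disjoint : ∀ i j : Fin h, i ≠ j →
    Disjoint (poly i ∩ ⋃ l < i, poly l) (poly j ∩ ⋃ l < j, poly l)

/-- The set `E₀` of all edges used for gluing in a polygonal decomposition. -/
def PolygonalDecomposition.glueEdges {V E : Type} [Fintype E] {G : Multigraph V E}
    (D : G.PolygonalDecomposition) : Set E :=
  ⋃ i : Fin D.h, D.poly i ∩ ⋃ j < i, D.poly j

/-- A polygonal graph: a connected multigraph admitting a polygonal decomposition. -/
def IsPolygonal {V E : Type} [Fintype E] (G : Multigraph V E) : Prop :=
  G.Connected ∧ Nonempty G.PolygonalDecomposition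

/-- A `*`-graph: a polygonal graph all of whose polygonal decompositions have acyclic
gluing edge set `E₀` (i.e. `h₁(E₀) = 0`). -/
def IsStarGraph {V E : Type} [Fintype E] (G : Multigraph V E) : Prop :=
  G.IsPolygonal ∧ ∀ D : G.PolygonalDecomposition, G.IsAcyclicSet D.glueEdges

end Multigraph

section AuxSection

open Finset

variable {V E ι : Type} [Fintype V] [Fintype E] [Fintype ι] [DecidableEq ι]
set_option linter.unusedSectionVars false
variable (G : Multigraph V E) (B : Module.Basis ι ℤ (G.cycleSpace ℤ))

/-- Any coordinate functional of the basis `B` of the cycle space extends to an integral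
functional on `ℤ^E`, represented by a weight vector `w`. -/
theorem cycle_exists_dual (j : ι) :
    ∃ w : E → ℤ, ∀ i : ι, ∑ e, w e * (B i).val e = if i = j then 1 else 0 := by
  classical
  set f := G.boundary ℤ with hf
  obtain ⟨n, bas⟩ := Submodule.basisOfPid (Pi.basisFun ℤ V) (LinearMap.range f)
  haveI : Module.Free ℤ (LinearMap.range f) := Module.Free.of_basis bas
  obtain ⟨s, hs⟩ := Module.projective_lifting_property f.rangeRestrict LinearMap.id
    f.surjective_rangeRestrict
  set π : (E → ℤ) →ₗ[ℤ] (E → ℤ) := LinearMap.id - s ∘ₗ f.rangeRestrict with hπ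
  have hrr : ∀ y : LinearMap.range f, f.rangeRestrict (s y) = y := by
    intro y
    have := DFunLike.congr_fun hs y
    exact this
  have hπmem : ∀ x, π x ∈ G.cycleSpace ℤ := by
    intro x
    have h1 : f.rangeRestrict (π x) = 0 := by
      simp only [hπ, LinearMap.sub_apply, LinearMap.id_apply, LinearMap.comp_apply, map_sub,
        hrr, sub_self]
    have h2 : f (π x) = 0 := by
      have := congrArg Subtype.val h1
      simpa using this
    exact h2
  have hπfix : ∀ x ∈ G.cycleSpace ℤ, π x = x := by
    intro x hx
    have hx0 : f x = 0 := hx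
    have : f.rangeRestrict x = 0 := by
      apply Subtype.ext
      simpa using hx0
    simp [hπ, this]
  set ρ : (E → ℤ) →ₗ[ℤ] (G.cycleSpace ℤ) := LinearMap.codRestrict _ π hπmem with hρ
  set φ : (E → ℤ) →ₗ[ℤ] ℤ := (B.coord j) ∘ₗ ρ with hφ
  have hφb : ∀ i : ι, φ ((B i).val) = if i = j then 1 else 0 := by
    intro i
    have h1 : ρ ((B i).val) = B i := by
      apply Subtype.ext
      simpa [hρ] using hπfix _ (B i).2
    have h2 : B.coord j (B i) = if i = j then 1 else 0 := by
      rw [Module.Basis.coord_apply, B.repr_self i, Finsupp.single_apply]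
    rw [hφ, LinearMap.comp_apply, h1, h2]
  refine ⟨fun e => φ (fun f' => if e = f' then 1 else 0), fun i => ?_⟩
  have hexp : (B i).val = ∑ e, (B i).val e • (fun f' => if e = f' then (1:ℤ) else 0) :=
    pi_eq_sum_univ _
  calc ∑ e, φ (fun f' => if e = f' then 1 else 0) * (B i).val e
      = ∑ e, φ ((B i).val e • (fun f' => if e = f' then (1:ℤ) else 0)) := by
        refine Finset.sum_congr rfl fun e _ => ?_
        rw [map_smul, smul_eq_mul, mul_comm]
    _ = φ ((B i).val) := by rw [← map_sum, ← hexp]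
    _ = if i = j then 1 else 0 := hφb i

theorem cycle_parity (c : ι → ℤ)
    (hc : ∀ e, ∑ i, c i * ((B i).val e * (B i).val e) = 0)
    (s : Finset E) (w : E → ℤ) :
    (2:ℤ) ∣ ∑ i, c i * (∑ e ∈ s, w e * (B i).val e)^2 := by
  classical
  induction s using Finset.induction_on with
  | empty => simp
  | @insert a s ha ih =>
    have expand : ∑ i, c i * (∑ e ∈ insert a s, w e * (B i).val e)^2
        = (w a * w a) * (∑ i, c i * ((B i).val a * (B i).val a))
          + (2 * ∑ i, c i * (w a * (B i).val a * ∑ e ∈ s, w e * (B i).val e)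
          + ∑ i, c i * (∑ e ∈ s, w e * (B i).val e)^2) := by
      rw [Finset.mul_sum, Finset.mul_sum, ← Finset.sum_add_distrib, ← Finset.sum_add_distrib]
      refine Finset.sum_congr rfl fun i _ => ?_
      rw [Finset.sum_insert ha]; ring
    rw [expand, hc a, mul_zero, zero_add]
    exact dvd_add (dvd_mul_right 2 _) ih

theorem cycle_indep_int : ∀ (n : ℕ) (c : ι → ℤ),
    (∀ e, ∑ i, c i * ((B i).val e * (B i).val e) = 0) →
    (∑ i, (c i).natAbs) = n → c = 0 := by
  intro n
  induction n using Nat.strong_induction_on with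
  | _ n IH =>
  intro c hc hn
  have heven : ∀ j, (2:ℤ) ∣ c j := by
    intro j
    obtain ⟨w, hw⟩ := cycle_exists_dual G B j
    have h2 := cycle_parity G B c hc Finset.univ w
    have heq : ∑ i, c i * (∑ e, w e * (B i).val e)^2 = c j := by
      rw [Finset.sum_congr rfl fun i _ => by rw [hw i]]
      have : ∀ i, c i * (if i = j then (1:ℤ) else 0)^2 = if i = j then c i else 0 := by
        intro i; split <;> simp
      rw [Finset.sum_congr rfl fun i _ => this i]
      simp
    rwa [heq] at h2
  rcases Nat.eq_zero_or_pos n with h0 | hpos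
  · funext i
    have : (c i).natAbs = 0 := by
      have := Finset.sum_eq_zero_iff.mp (h0 ▸ hn) i (Finset.mem_univ i)
      exact this
    exact Int.natAbs_eq_zero.mp this
  · set c' : ι → ℤ := fun i => c i / 2 with hc'def
    have hc2 : ∀ i, c i = 2 * c' i := fun i => (Int.mul_ediv_cancel' (heven i)).symm
    have hc'0 : ∀ e, ∑ i, c' i * ((B i).val e * (B i).val e) = 0 := by
      intro e
      have h1 : (2:ℤ) * ∑ i, c' i * ((B i).val e * (B i).val e) = 0 := by
        rw [Finset.mul_sum]
        rw [Finset.sum_congr rfl fun i _ => by rw [← mul_assoc, ← hc2 i]]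
        exact hc e
      exact (mul_eq_zero.mp h1).resolve_left two_ne_zero
    set m : ℕ := ∑ i, (c' i).natAbs with hm
    have hn2 : n = 2 * m := by
      rw [← hn, hm, Finset.mul_sum]
      refine Finset.sum_congr rfl fun i _ => ?_
      rw [hc2 i, Int.natAbs_mul]
      rfl
    have hmn : m < n := by omega
    have : c' = 0 := IH m hmn c' hc'0 rfl
    funext i
    rw [hc2 i, congrFun this i]
    simp

theorem cycle_indep_rat (c : ι → ℚ)
    (hc : ∀ e, ∑ i, c i * (((B i).val e * (B i).val e : ℤ) : ℚ) = 0) : c = 0 := by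
  classical
  set d : ℤ := ∏ i, ((c i).den : ℤ) with hd
  have hd0 : (d:ℚ) ≠ 0 := by
    rw [Int.cast_ne_zero, hd]
    exact Finset.prod_ne_zero_iff.mpr fun i _ => Int.natCast_ne_zero.mpr (c i).den_nz
  have hint : ∀ i, ∃ z : ℤ, (z : ℚ) = c i * d := by
    intro i
    obtain ⟨t, ht⟩ := Finset.dvd_prod_of_mem (fun i => ((c i).den : ℤ)) (Finset.mem_univ i)
    refine ⟨(c i).num * t, ?_⟩
    have : (d : ℚ) = ((c i).den : ℚ) * (t : ℚ) := by
      rw [hd, ht]; push_cast; ring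
    rw [this, ← mul_assoc, Rat.mul_den_eq_num]
    push_cast; ring
  choose mz hmz using hint
  have hmz0 : ∀ e, ∑ i, mz i * ((B i).val e * (B i).val e) = 0 := by
    intro e
    have hcast : ((∑ i, mz i * ((B i).val e * (B i).val e) : ℤ) : ℚ) = 0 := by
      push_cast
      rw [Finset.sum_congr rfl fun i _ => by rw [hmz i]]
      have : ∑ i, c i * (d:ℚ) * (((B i).val e : ℚ) * ((B i).val e : ℚ))
          = (d:ℚ) * ∑ i, c i * (((B i).val e : ℚ) * ((B i).val e : ℚ)) := by
        rw [Finset.mul_sum]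
        exact Finset.sum_congr rfl fun i _ => by ring
      rw [this]
      have hce := hc e
      push_cast at hce
      rw [hce, mul_zero]
    exact_mod_cast hcast
  have hmzz := cycle_indep_int G B _ mz hmz0 rfl
  funext i
  have := hmz i
  rw [congrFun hmzz i] at this
  simp only [Int.cast_zero, Pi.zero_apply] at this ⊢
  rcases mul_eq_zero.mp this.symm with h | h
  · exact h
  · exact absurd h hd0

end AuxSection

/-- Let `k` be a field of characteristic 0, `Γ` a finite connected multigraph
with `h₁(Γ) ≥ 1`, and `B` any `ℤ`-basis of `H₁(Γ, ℤ)`.  Then the `h₁(Γ)` diagonal entries of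
the matrix `M(Γ)_B` are linearly independent elements of the space of linear forms
`k[X_e : e ∈ E(Γ)]₁`. -/
theorem graphMatrix_diagonal_linearIndependent (k : Type*) [Field k] [CharZero k]
    {V E : Type} [Fintype V] [Fintype E] (G : Multigraph V E) (hG : G.Connected)
    {ι : Type} [Fintype ι] [Nonempty ι] (B : Module.Basis ι ℤ (G.cycleSpace ℤ)) :
    LinearIndependent k (fun i : ι => G.graphMatrix k B i i) := by
  classical
  rw [Fintype.linearIndependent_iff]
  intro g hg
  have hcoeff : ∀ e, ∑ i, g i * (((B i).val e * (B i).val e : ℤ) : k) = 0 := by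
    intro e
    have h := congrArg (MvPolynomial.coeff (Finsupp.single e 1)) hg
    simp only [Multigraph.graphMatrix, Matrix.of_apply, MvPolynomial.coeff_sum,
      MvPolynomial.coeff_smul, MvPolynomial.coeff_C_mul, MvPolynomial.coeff_X',
      MvPolynomial.coeff_zero, smul_eq_mul, mul_ite, mul_one, mul_zero,
      Finsupp.single_eq_single_iff, one_ne_zero, and_false, or_false, and_true] at h
    simpa [Finset.sum_ite_eq'] using h
  set u : ι → E → ℚ := fun i e => (((B i).val e * (B i).val e : ℤ) : ℚ) with hu
  set T : (ι → ℚ) →ₗ[ℚ] (E → ℚ) := Fintype.linearCombination ℚ u with hT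
  have hker : LinearMap.ker T = ⊥ := by
    rw [LinearMap.ker_eq_bot']
    intro c hc0
    apply cycle_indep_rat G B c
    intro e
    have h1 : (∑ i, c i • u i) e = 0 := by
      rw [← Fintype.linearCombination_apply ℚ u c, ← hT, hc0]; rfl
    simpa [Finset.sum_apply, hu, smul_eq_mul] using h1
  obtain ⟨g', hg'⟩ := T.exists_leftInverse_of_injective hker
  have hproj : ∀ i, g' (u i) = Pi.single i (1:ℚ) := by
    intro i
    have h1 : T (Pi.single i (1:ℚ)) = u i := by
      rw [hT, Fintype.linearCombination_apply ℚ u (Pi.single i (1:ℚ))]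
      rw [Finset.sum_eq_single i (fun b _ hb => by simp [Pi.single_apply, hb]) (by simp)]
      simp
    have h2 := DFunLike.congr_fun hg' (Pi.single i (1:ℚ))
    rw [LinearMap.comp_apply, h1] at h2
    simpa using h2
  intro j
  set p : E → ℚ := fun e => g' (fun f' => if e = f' then (1:ℚ) else 0) j with hp
  have key : ∀ i, ∑ e, p e * u i e = if j = i then 1 else 0 := by
    intro i
    have hexp : (u i) = ∑ e, u i e • (fun f' => if e = f' then (1:ℚ) else 0) :=
      pi_eq_sum_univ _
    calc ∑ e, p e * u i e
        = ∑ e, (u i e • g' (fun f' => if e = f' then (1:ℚ) else 0)) j := by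
          refine Finset.sum_congr rfl fun e _ => ?_
          rw [hp, Pi.smul_apply, smul_eq_mul, mul_comm]
      _ = (∑ e, u i e • g' (fun f' => if e = f' then (1:ℚ) else 0)) j := by
          rw [Finset.sum_apply]
      _ = g' (u i) j := by
          have : g' (∑ e, u i e • (fun f' => if e = f' then (1:ℚ) else 0))
              = ∑ e, u i e • g' (fun f' => if e = f' then (1:ℚ) else 0) := by
            rw [map_sum]
            exact Finset.sum_congr rfl fun e _ => by rw [map_smul]
          rw [← this, ← hexp]
      _ = if j = i then 1 else 0 := by rw [hproj i, Pi.single_apply]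
  calc g j = ∑ i, g i * (((if j = i then (1:ℚ) else 0) : ℚ) : k) := by
        rw [Finset.sum_eq_single j (fun i _ hi => by simp [Ne.symm hi]) (by simp)]
        simp
    _ = ∑ i, g i * ((∑ e, p e * u i e : ℚ) : k) := by
        exact Finset.sum_congr rfl fun i _ => by rw [key i]
    _ = ∑ i, ∑ e, g i * (((p e : ℚ) : k) * (((B i).val e * (B i).val e : ℤ) : k)) := by
        refine Finset.sum_congr rfl fun i _ => ?_
        simp only [hu]
        push_cast
        rw [Finset.mul_sum]
    _ = ∑ e, ((p e : ℚ) : k) * (∑ i, g i * (((B i).val e * (B i).val e : ℤ) : k)) := by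
        rw [Finset.sum_comm]
        refine Finset.sum_congr rfl fun e _ => ?_
        rw [Finset.mul_sum]
        exact Finset.sum_congr rfl fun i _ => by ring
    _ = 0 := by
        refine Finset.sum_eq_zero fun e _ => ?_
        rw [hcoeff e, mul_zero]
end

section
/- Let Γ be a finite connected multigraph, e ∈ E(Γ), and let Γ' be the graph obtained from Γ by subdividing the edge e into two edges e₁ and e₂ (inserting a new vertex of degree 2 in the middle of e). Then the graph polynomials satisfy P(Γ') = P(Γ)|_{X_e = X_{e₁} + X_{e₂}}, i.e., P(Γ') is obtained from P(Γ) by substituting X_{e₁} + X_{e₂} for the variable X_e. -/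
namespace Multigraph

/-- The graph `Γ'` obtained from `Γ` by subdividing the edge `e` into two edges
`e₁ = Sum.inr false` and `e₂ = Sum.inr true`, inserting the new vertex `none` in the middle
of `e`; the other edges are `Sum.inl f`, `f ≠ e`. -/
def subdivide {V E : Type} (G : Multigraph V E) (e : E) :
    Multigraph (Option V) ({f : E // f ≠ e} ⊕ Bool) where
  src f := match f with
    | Sum.inl f => some (G.src f.1)
    | Sum.inr false => some (G.src e)
    | Sum.inr true => none
  tgt f := match f with
    | Sum.inl f => some (G.tgt f.1)
    | Sum.inr false => none
    | Sum.inr true => some (G.tgt e)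

end Multigraph

section SubdivisionAux

namespace Multigraph

open Relation Finset MvPolynomial

variable {V E : Type} [Fintype V] [Fintype E] [DecidableEq E]

private theorem adjSymm {G : Multigraph V E} {P : E → Prop} : Symmetric (G.Adj P) := by
  rintro a b ⟨f, hf, h⟩
  exact ⟨f, hf, h.symm⟩

private theorem rtg_map {α β : Type*} {r : α → α → Prop} {s : β → β → Prop} (f : α → β)
    (h : ∀ a b, r a b → ReflTransGen s (f a) (f b)) {a b : α}
    (hab : ReflTransGen r a b) : ReflTransGen s (f a) (f b) := by
  induction hab with
  | refl => exact .refl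
  | tail _ h2 ih => exact ih.trans (h _ _ h2)

variable (e : E)

/-- Encoding edge subsets of the subdivision by a pair of subsets. -/
private def Phi (T : Finset E) (s : Finset Bool) : Finset ({f : E // f ≠ e} ⊕ Bool) :=
  (T.subtype (· ≠ e)).map ⟨Sum.inl, Sum.inl_injective⟩ ∪ s.map ⟨Sum.inr, Sum.inr_injective⟩

@[simp] private theorem mem_Phi_inl {T : Finset E} {s : Finset Bool} {f : {f : E // f ≠ e}} :
    Sum.inl f ∈ Phi e T s ↔ f.1 ∈ T := by
  simp [Phi]

@[simp] private theorem mem_Phi_inr {T : Finset E} {s : Finset Bool} {b : Bool} :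
    Sum.inr b ∈ Phi e T s ↔ b ∈ s := by
  simp [Phi]

private theorem compl_Phi (T : Finset E) (s : Finset Bool) : (Phi e T s)ᶜ = Phi e Tᶜ sᶜ := by
  ext x
  rcases x with f | b <;> simp

private theorem card_Phi (T : Finset E) (s : Finset Bool) (he : e ∉ T) :
    (Phi e T s).card = T.card + s.card := by
  have hT : T.filter (· ≠ e) = T := filter_eq_self.2 fun f hf h => he (h ▸ hf)
  rw [Phi, card_union_of_disjoint (by simp [disjoint_left]), card_map, card_map, card_subtype, hT]

private def projE : ({f : E // f ≠ e} ⊕ Bool) → E := Sum.elim Subtype.val fun _ => e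

private theorem erase_image_Phi (T : Finset E) (s : Finset Bool) (he : e ∉ T) :
    ((Phi e T s).image (projE e)).erase e = T := by
  ext f
  simp only [mem_erase, mem_image]
  constructor
  · rintro ⟨hf, x, hx, rfl⟩
    rcases x with g | b
    · exact (mem_Phi_inl e).1 hx
    · exact absurd rfl hf
  · intro hf
    have hfe : f ≠ e := fun h => he (h ▸ hf)
    exact ⟨hfe, Sum.inl ⟨f, hfe⟩, (mem_Phi_inl e).2 hf, rfl⟩

private theorem Phi_recon (T' : Finset ({f : E // f ≠ e} ⊕ Bool)) :
    Phi e ((T'.image (projE e)).erase e) (univ.filter fun b => Sum.inr b ∈ T') = T' := by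
  ext x
  rcases x with f | b
  · simp only [mem_Phi_inl, mem_erase, mem_image]
    constructor
    · rintro ⟨hf, x, hx, hpx⟩
      rcases x with g | c
      · obtain rfl : g = f := Subtype.ext hpx
        exact hx
      · exact absurd hpx.symm hf
    · intro hx
      exact ⟨f.2, Sum.inl f, hx, rfl⟩
  · simp

variable (G : Multigraph V E)

private theorem up_step {P : E → Prop} {Q : {f : E // f ≠ e} ⊕ Bool → Prop}
    (hQl : ∀ f : {f : E // f ≠ e}, P f.1 → Q (Sum.inl f))
    (hQf : P e → Q (Sum.inr false)) (hQt : P e → Q (Sum.inr true))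
    {a b : V} (h : G.Adj P a b) :
    ReflTransGen ((G.subdivide e).Adj Q) (some a) (some b) := by
  obtain ⟨f, hPf, hor⟩ := h
  by_cases hf : f = e
  · subst hf
    rcases hor with ⟨rfl, rfl⟩ | ⟨rfl, rfl⟩
    · exact .head ⟨Sum.inr false, hQf hPf, Or.inl ⟨rfl, rfl⟩⟩
        (.single ⟨Sum.inr true, hQt hPf, Or.inl ⟨rfl, rfl⟩⟩)
    · exact .head ⟨Sum.inr true, hQt hPf, Or.inr ⟨rfl, rfl⟩⟩
        (.single ⟨Sum.inr false, hQf hPf, Or.inr ⟨rfl, rfl⟩⟩)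
  · rcases hor with ⟨rfl, rfl⟩ | ⟨rfl, rfl⟩
    · exact .single ⟨Sum.inl ⟨f, hf⟩, hQl _ hPf, Or.inl ⟨rfl, rfl⟩⟩
    · exact .single ⟨Sum.inl ⟨f, hf⟩, hQl _ hPf, Or.inr ⟨rfl, rfl⟩⟩

private theorem conn_up_univ {T : Finset E} (hc : G.ConnectedOn (· ∈ insert e T)) :
    (G.subdivide e).ConnectedOn (· ∈ Phi e T univ) := by
  have key : ∀ a b : V,
      ReflTransGen ((G.subdivide e).Adj (· ∈ Phi e T univ)) (some a) (some b) := by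
    intro a b
    refine rtg_map some (fun a b hab => ?_) (hc a b)
    exact up_step e G
      (fun f hf => (mem_Phi_inl e).2 ((mem_insert.1 hf).resolve_left f.2))
      (fun _ => by simp) (fun _ => by simp) hab
  rintro (_ | a) (_ | b)
  · exact .refl
  · exact .head ⟨Sum.inr false, by simp, Or.inr ⟨rfl, rfl⟩⟩ (key _ b)
  · exact (key a _).tail ⟨Sum.inr false, by simp, Or.inl ⟨rfl, rfl⟩⟩
  · exact key a b

private theorem conn_up_single {T : Finset E} (he : e ∉ T) (b : Bool)
    (hc : G.ConnectedOn (· ∈ T)) :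
    (G.subdivide e).ConnectedOn (· ∈ Phi e T {b}) := by
  have key : ∀ a c : V,
      ReflTransGen ((G.subdivide e).Adj (· ∈ Phi e T {b})) (some a) (some c) := by
    intro a c
    refine rtg_map some (fun a c hac => ?_) (hc a c)
    exact up_step e G (fun f hf => (mem_Phi_inl e).2 hf)
      (fun hP => absurd hP he) (fun hP => absurd hP he) hac
  have hadj : ∃ w : V, (G.subdivide e).Adj (· ∈ Phi e T {b}) none (some w) := by
    cases b
    · exact ⟨G.src e, Sum.inr false, by simp, Or.inr ⟨rfl, rfl⟩⟩
    · exact ⟨G.tgt e, Sum.inr true, by simp, Or.inl ⟨rfl, rfl⟩⟩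
  obtain ⟨w, hw⟩ := hadj
  rintro (_ | a) (_ | c)
  · exact .refl
  · exact .head hw (key w c)
  · exact (key a w).tail (adjSymm hw)
  · exact key a c

private theorem conn_down_univ {T : Finset E}
    (hc : (G.subdivide e).ConnectedOn (· ∈ Phi e T univ)) :
    G.ConnectedOn (· ∈ insert e T) := by
  intro a b
  have hstep : ∀ x y, (G.subdivide e).Adj (· ∈ Phi e T univ) x y →
      ReflTransGen (G.Adj (· ∈ insert e T)) (x.getD (G.src e)) (y.getD (G.src e)) := by
    rintro x y ⟨(f | c), hf, hor⟩
    · rcases hor with ⟨rfl, rfl⟩ | ⟨rfl, rfl⟩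
      · exact .single ⟨f.1, mem_insert_of_mem ((mem_Phi_inl e).1 hf), Or.inl ⟨rfl, rfl⟩⟩
      · exact .single ⟨f.1, mem_insert_of_mem ((mem_Phi_inl e).1 hf), Or.inr ⟨rfl, rfl⟩⟩
    · cases c
      · rcases hor with ⟨rfl, rfl⟩ | ⟨rfl, rfl⟩ <;> exact .refl
      · rcases hor with ⟨rfl, rfl⟩ | ⟨rfl, rfl⟩
        · exact .single ⟨e, mem_insert_self e T, Or.inl ⟨rfl, rfl⟩⟩
        · exact .single ⟨e, mem_insert_self e T, Or.inr ⟨rfl, rfl⟩⟩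
  simpa using rtg_map _ hstep (hc (some a) (some b))

private theorem conn_down_single {T : Finset E} (b : Bool)
    (hc : (G.subdivide e).ConnectedOn (· ∈ Phi e T {b})) :
    G.ConnectedOn (· ∈ T) := by
  intro a c
  have hstep : ∀ x y, (G.subdivide e).Adj (· ∈ Phi e T {b}) x y →
      ReflTransGen (G.Adj (· ∈ T)) (x.getD (bif b then G.tgt e else G.src e))
        (y.getD (bif b then G.tgt e else G.src e)) := by
    rintro x y ⟨(f | c'), hf, hor⟩
    · rcases hor with ⟨rfl, rfl⟩ | ⟨rfl, rfl⟩
      · exact .single ⟨f.1, (mem_Phi_inl e).1 hf, Or.inl ⟨rfl, rfl⟩⟩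
      · exact .single ⟨f.1, (mem_Phi_inl e).1 hf, Or.inr ⟨rfl, rfl⟩⟩
    · have hcb : c' = b := by simpa using hf
      subst hcb
      cases c' <;> rcases hor with ⟨rfl, rfl⟩ | ⟨rfl, rfl⟩ <;> exact .refl
  simpa using rtg_map _ hstep (hc (some a) (some c))

private theorem no_tree_neither (hV : Nonempty V) {Q : {f : E // f ≠ e} ⊕ Bool → Prop}
    (h0 : ¬ Q (Sum.inr false)) (h1 : ¬ Q (Sum.inr true)) :
    ¬ (G.subdivide e).ConnectedOn Q := by
  intro hc
  obtain ⟨v⟩ := hV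
  have key : ∀ z, ReflTransGen ((G.subdivide e).Adj Q) none z → z = none := by
    intro z hz
    induction hz with
    | refl => rfl
    | tail _ h2 ih =>
      subst ih
      obtain ⟨x, hx, hor⟩ := h2
      rcases x with f | c
      · rcases hor with ⟨h1', _⟩ | ⟨_, h1'⟩ <;> exact (Option.some_ne_none _ h1').elim
      · cases c
        · exact absurd hx h0
        · exact absurd hx h1
  exact Option.some_ne_none _ (key _ (hc none (some v)))

private theorem prod_Phi_nil (S : Finset E) :
    (∏ x ∈ Phi e S ∅, (X x : MvPolynomial ({f : E // f ≠ e} ⊕ Bool) ℤ)) =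
      ∏ f ∈ S.erase e, if hf : f = e then X (Sum.inr false) + X (Sum.inr true)
        else X (Sum.inl ⟨f, hf⟩) := by
  rw [Phi, map_empty, union_empty, prod_map]
  refine prod_bij (fun f _ => f.1) ?_ ?_ ?_ ?_
  · intro f hf
    exact mem_erase.2 ⟨f.2, by simpa using hf⟩
  · intro f₁ _ f₂ _ h
    exact Subtype.ext h
  · intro f hf
    rw [mem_erase] at hf
    exact ⟨⟨f, hf.1⟩, by simpa using hf.2, rfl⟩
  · intro f _
    rw [dif_neg f.2]
    rfl

private theorem prod_Phi_single (S : Finset E) (b : Bool) :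
    (∏ x ∈ Phi e S {b}, (X x : MvPolynomial ({f : E // f ≠ e} ⊕ Bool) ℤ)) =
      X (Sum.inr b) * ∏ x ∈ Phi e S ∅, (X x : MvPolynomial ({f : E // f ≠ e} ⊕ Bool) ℤ) := by
  rw [show Phi e S {b} = insert (Sum.inr b) (Phi e S ∅) by
    ext x; rcases x with f | c <;> simp [eq_comm]]
  rw [prod_insert (by simp)]

private theorem compl_erase (T : Finset E) (he : e ∈ T) : ((T.erase e)ᶜ).erase e = Tᶜ := by
  ext f
  simp only [mem_erase, mem_compl, not_and]
  constructor
  · rintro ⟨h1, h2⟩ hf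
    exact h2 h1 hf
  · intro h
    exact ⟨fun hfe => h (hfe ▸ he), fun _ hf => h hf⟩

open Classical in
private theorem piece_one :
    ∑ T' ∈ ((univ.filter fun T' => (G.subdivide e).IsSpanningTree T').filter
        fun T' => Sum.inr false ∈ T').filter (fun T' => Sum.inr true ∈ T'),
      ∏ x ∈ T'ᶜ, (X x : MvPolynomial ({f : E // f ≠ e} ⊕ Bool) ℤ)
    = ∑ T ∈ (univ.filter fun T => G.IsSpanningTree T).filter (fun T => e ∈ T),
      ∏ f ∈ Tᶜ, if hf : f = e then X (Sum.inr false) + X (Sum.inr true)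
        else X (Sum.inl ⟨f, hf⟩) := by
  refine (Finset.sum_nbij' (fun T => Phi e (T.erase e) univ)
    (fun T' => insert e ((T'.image (projE e)).erase e)) ?_ ?_ ?_ ?_ ?_).symm
  · -- hi : maps into the class
    intro T hT
    simp only [mem_filter, mem_univ, true_and] at hT ⊢
    obtain ⟨⟨hconn, hcard⟩, heT⟩ := hT
    refine ⟨⟨⟨?_, ?_⟩, by simp⟩, by simp⟩
    · exact conn_up_univ e G (by rwa [insert_erase heT])
    · have h1 := card_erase_add_one heT
      rw [card_Phi e _ _ (notMem_erase e T)]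
      simp only [Fintype.card_option, card_univ, Fintype.card_bool]
      omega
  · -- hj
    intro T' hT'
    simp only [mem_filter, mem_univ, true_and] at hT' ⊢
    obtain ⟨⟨hST, hpf⟩, hpt⟩ := hT'
    have hs : (univ.filter fun b => Sum.inr b ∈ T') = univ := by
      rw [Finset.eq_univ_iff_forall]
      intro b
      simp only [mem_filter, mem_univ, true_and]
      cases b
      exacts [hpf, hpt]
    have hrec := Phi_recon e T'
    rw [hs] at hrec
    refine ⟨⟨?_, ?_⟩, mem_insert_self e _⟩
    · exact conn_down_univ e G (by rw [hrec]; exact hST.1)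
    · have h1 : (Phi e ((T'.image (projE e)).erase e) univ).card
          = ((T'.image (projE e)).erase e).card + 2 := by
        rw [card_Phi e _ _ (notMem_erase e _)]
        simp
      rw [hrec] at h1
      have h2 := hST.2
      rw [Fintype.card_option] at h2
      rw [card_insert_of_notMem (notMem_erase e _)]
      omega
  · intro T hT
    simp only [mem_filter, mem_univ, true_and] at hT
    show insert e (((Phi e (T.erase e) univ).image (projE e)).erase e) = T
    rw [erase_image_Phi e _ _ (notMem_erase e T), insert_erase hT.2]
  · intro T' hT'
    simp only [mem_filter, mem_univ, true_and] at hT'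
    obtain ⟨⟨hST, hpf⟩, hpt⟩ := hT'
    have hs : (univ.filter fun b => Sum.inr b ∈ T') = univ := by
      rw [Finset.eq_univ_iff_forall]
      intro b
      simp only [mem_filter, mem_univ, true_and]
      cases b
      exacts [hpf, hpt]
    have hrec := Phi_recon e T'
    rw [hs] at hrec
    show Phi e ((insert e ((T'.image (projE e)).erase e)).erase e) univ = T'
    rw [Finset.erase_insert (notMem_erase e _), hrec]
  · intro T hT
    simp only [mem_filter, mem_univ, true_and] at hT
    rw [compl_Phi, compl_univ, prod_Phi_nil, compl_erase e T hT.2]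

open Classical in
private theorem piece_single (b : Bool)
    (s : Finset (Finset ({f : E // f ≠ e} ⊕ Bool)))
    (hs : ∀ T', T' ∈ s ↔ ((G.subdivide e).IsSpanningTree T' ∧
      Sum.inr b ∈ T' ∧ Sum.inr (!b) ∉ T')) :
    ∑ T' ∈ s, ∏ x ∈ T'ᶜ, (X x : MvPolynomial ({f : E // f ≠ e} ⊕ Bool) ℤ)
    = ∑ T ∈ (univ.filter fun T => G.IsSpanningTree T).filter (fun T => e ∉ T),
      X (Sum.inr (!b)) *
        ∏ f ∈ Tᶜ.erase e, if hf : f = e then X (Sum.inr false) + X (Sum.inr true)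
          else X (Sum.inl ⟨f, hf⟩) := by
  refine (Finset.sum_nbij' (fun T => Phi e T {b})
    (fun T' => (T'.image (projE e)).erase e) ?_ ?_ ?_ ?_ ?_).symm
  · intro T hT
    simp only [mem_filter, mem_univ, true_and] at hT
    obtain ⟨⟨hconn, hcard⟩, heT⟩ := hT
    rw [hs]
    refine ⟨⟨conn_up_single e G heT b hconn, ?_⟩, by simp, ?_⟩
    · rw [card_Phi e _ _ heT]
      simp only [Fintype.card_option, card_singleton]
      omega
    · cases b <;> simp
  · intro T' hT'
    rw [hs] at hT'
    obtain ⟨hST, hpb, hnb⟩ := hT'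
    have hsb : (univ.filter fun c => Sum.inr c ∈ T') = {b} := by
      ext c
      simp only [mem_filter, mem_univ, true_and, mem_singleton]
      cases b <;> cases c <;> simp_all
    have hrec := Phi_recon e T'
    rw [hsb] at hrec
    simp only [mem_filter, mem_univ, true_and]
    refine ⟨⟨?_, ?_⟩, notMem_erase e _⟩
    · exact conn_down_single e G b (by rw [hrec]; exact hST.1)
    · have h1 : (Phi e ((T'.image (projE e)).erase e) {b}).card
          = ((T'.image (projE e)).erase e).card + 1 := by
        rw [card_Phi e _ _ (notMem_erase e _)]
        simp
      rw [hrec] at h1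
      have h2 := hST.2
      rw [Fintype.card_option] at h2
      omega
  · intro T hT
    simp only [mem_filter, mem_univ, true_and] at hT
    show ((Phi e T {b}).image (projE e)).erase e = T
    exact erase_image_Phi e T {b} hT.2
  · intro T' hT'
    rw [hs] at hT'
    obtain ⟨hST, hpb, hnb⟩ := hT'
    have hsb : (univ.filter fun c => Sum.inr c ∈ T') = {b} := by
      ext c
      simp only [mem_filter, mem_univ, true_and, mem_singleton]
      cases b <;> cases c <;> simp_all
    have hrec := Phi_recon e T'
    rw [hsb] at hrec
    exact hrec
  · intro T hT
    simp only [mem_filter, mem_univ, true_and] at hT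
    rw [compl_Phi, show ({b} : Finset Bool)ᶜ = {!b} by cases b <;> decide,
      prod_Phi_single, prod_Phi_nil]

open Classical in
private theorem GP_eq' {W F : Type} [Fintype W] [Fintype F] [DecidableEq F] (H : Multigraph W F) :
    H.graphPolynomial ℤ =
      ∑ T ∈ @Finset.filter _ (fun T : Finset F => H.IsSpanningTree T)
          (fun a => Classical.propDecidable _) Finset.univ,
        ∏ x ∈ Tᶜ, (X x : MvPolynomial F ℤ) := by
  rw [Multigraph.graphPolynomial]
  apply Finset.sum_congr
  · congr!
  · intro T _
    apply Finset.prod_congr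
    · ext y
      simp
    · intro x _
      congr!

open Classical in
private theorem main_key (hV : Nonempty V) :
    (∑ T' ∈ Finset.univ.filter
        (fun T' : Finset ({f : E // f ≠ e} ⊕ Bool) => (G.subdivide e).IsSpanningTree T'),
      ∏ x ∈ T'ᶜ, (X x : MvPolynomial ({f : E // f ≠ e} ⊕ Bool) ℤ))
    = ∑ T ∈ Finset.univ.filter (fun T : Finset E => G.IsSpanningTree T),
        ∏ f ∈ Tᶜ, if hf : f = e then X (Sum.inr false) + X (Sum.inr true)
          else X (Sum.inl ⟨f, hf⟩) := by
  rw [← Finset.sum_filter_add_sum_filter_not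
      (Finset.univ.filter fun T : Finset E => G.IsSpanningTree T) (fun T => e ∈ T),
    ← Finset.sum_filter_add_sum_filter_not
      (Finset.univ.filter fun T' : Finset ({f : E // f ≠ e} ⊕ Bool) =>
        (G.subdivide e).IsSpanningTree T') (fun T' => Sum.inr false ∈ T'),
    ← Finset.sum_filter_add_sum_filter_not
      ((Finset.univ.filter fun T' : Finset ({f : E // f ≠ e} ⊕ Bool) =>
        (G.subdivide e).IsSpanningTree T').filter fun T' => Sum.inr false ∈ T')
      (fun T' => Sum.inr true ∈ T'),
    ← Finset.sum_filter_add_sum_filter_not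
      ((Finset.univ.filter fun T' : Finset ({f : E // f ≠ e} ⊕ Bool) =>
        (G.subdivide e).IsSpanningTree T').filter fun T' => ¬ Sum.inr false ∈ T')
      (fun T' => Sum.inr true ∈ T')]
  have hempty : (((Finset.univ.filter fun T' : Finset ({f : E // f ≠ e} ⊕ Bool) =>
        (G.subdivide e).IsSpanningTree T').filter fun T' => ¬ Sum.inr false ∈ T').filter
        fun T' => ¬ Sum.inr true ∈ T') = ∅ := by
    rw [Finset.eq_empty_iff_forall_notMem]
    intro T' hT'
    simp only [Finset.mem_filter, Finset.mem_univ, true_and] at hT'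
    exact no_tree_neither e G hV hT'.1.2 hT'.2 hT'.1.1.1
  have hS2 := piece_single e G false
    (((Finset.univ.filter fun T' : Finset ({f : E // f ≠ e} ⊕ Bool) =>
        (G.subdivide e).IsSpanningTree T').filter fun T' => Sum.inr false ∈ T').filter
        fun T' => ¬ Sum.inr true ∈ T')
    (by
      intro T'
      simp only [Finset.mem_filter, Finset.mem_univ, true_and, Bool.not_false]
      tauto)
  have hS3 := piece_single e G true
    (((Finset.univ.filter fun T' : Finset ({f : E // f ≠ e} ⊕ Bool) =>
        (G.subdivide e).IsSpanningTree T').filter fun T' => ¬ Sum.inr false ∈ T').filter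
        fun T' => Sum.inr true ∈ T')
    (by
      intro T'
      simp only [Finset.mem_filter, Finset.mem_univ, true_and, Bool.not_true]
      tauto)
  rw [hempty, Finset.sum_empty, add_zero, piece_one e G, hS2, hS3]
  simp only [Bool.not_false, Bool.not_true]
  have hB : (∑ T ∈ (Finset.univ.filter fun T : Finset E => G.IsSpanningTree T).filter
        (fun T => e ∉ T),
        X (Sum.inr true) * ∏ f ∈ Tᶜ.erase e,
          if hf : f = e then (X (Sum.inr false) + X (Sum.inr true) :
            MvPolynomial ({f : E // f ≠ e} ⊕ Bool) ℤ) else X (Sum.inl ⟨f, hf⟩))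
      + (∑ T ∈ (Finset.univ.filter fun T : Finset E => G.IsSpanningTree T).filter
        (fun T => e ∉ T),
        X (Sum.inr false) * ∏ f ∈ Tᶜ.erase e,
          if hf : f = e then X (Sum.inr false) + X (Sum.inr true) else X (Sum.inl ⟨f, hf⟩))
      = ∑ T ∈ (Finset.univ.filter fun T : Finset E => G.IsSpanningTree T).filter
        (fun T => e ∉ T),
        ∏ f ∈ Tᶜ, if hf : f = e then X (Sum.inr false) + X (Sum.inr true)
          else X (Sum.inl ⟨f, hf⟩) := by
    rw [← Finset.sum_add_distrib]
    refine Finset.sum_congr rfl fun T hT => ?_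
    simp only [Finset.mem_filter, Finset.mem_univ, true_and] at hT
    have he' : e ∈ Tᶜ := Finset.mem_compl.2 hT.2
    rw [← Finset.mul_prod_erase Tᶜ _ he', dif_pos rfl]
    ring
  rw [add_assoc, hB]

end Multigraph

end SubdivisionAux

open MvPolynomial in
/-- Let `Γ` be a finite connected multigraph, `e ∈ E(Γ)`, and `Γ'` the graph
obtained from `Γ` by subdividing the edge `e` into two edges `e₁` and `e₂`.  Then
`P(Γ') = P(Γ)|_{X_e = X_{e₁} + X_{e₂}}`, i.e. `P(Γ')` is obtained from `P(Γ)` by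
substituting `X_{e₁} + X_{e₂}` for the variable `X_e` (and renaming each other variable
`X_f` to itself). -/
theorem graphPolynomial_subdivide {V E : Type} [Fintype V] [Fintype E] [DecidableEq E]
    (G : Multigraph V E) (hG : G.Connected) (e : E) :
    (G.subdivide e).graphPolynomial ℤ =
      aeval (fun f : E =>
          if hf : f = e then
            X (Sum.inr false) + X (Sum.inr true)
          else
            X (Sum.inl ⟨f, hf⟩))
        (G.graphPolynomial ℤ) := by
  obtain ⟨hV, -⟩ := hG
  rw [Multigraph.GP_eq' (G.subdivide e), Multigraph.GP_eq' G, map_sum]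
  simp only [map_prod, aeval_X]
  exact Multigraph.main_key e G hV
end
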